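/- arXiv:1207.1536 — 15 statements merged into one kernel-verified Lean document; each statement's English description precedes it below -/
import Mathlib

section
/- Let X be a metric space and f : X → X a continuous map. If f is topologically transitive, then f is strongly indecomposable; that is, for every sequence (A_n)_{n≥1} of f-invariant closed subsets of X each having nonempty interior, the intersection ⋂_{n≥1} A_n has nonempty interior. -/
/-- A self-map of a topological space is topologically transitive if for any two
nonempty open sets `U, V` some iterate image of `U` meets `V`. -/
def TopTransitive {Y : Type*} [TopologicalSpace Y] (g : Y → Y) : Prop :=
  ∀ U V : Set Y, IsOpen U → IsOpen V → U.Nonempty → V.Nonempty →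
    ∃ n : ℕ, (g^[n] '' U ∩ V).Nonempty

/-- A self-map is strongly indecomposable if for every sequence of invariant closed
sets with nonempty interior, the intersection has nonempty interior. -/
def StronglyIndecomposable {Y : Type*} [TopologicalSpace Y] (g : Y → Y) : Prop :=
  ∀ A : ℕ → Set Y, (∀ n, IsClosed (A n)) → (∀ n, g '' A n ⊆ A n) →
    (∀ n, (interior (A n)).Nonempty) → (interior (⋂ n, A n)).Nonempty

theorem transitive_implies_stronglyIndecomposable {X : Type*} [MetricSpace X]
    (f : X → X) (hf : Continuous f) (htrans : TopTransitive f) :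
    StronglyIndecomposable f := by
  intro A hclosed hinv hint
  -- iterated invariance
  have hiter : ∀ n m, f^[m] '' A n ⊆ A n := by
    intro n m
    induction m with
    | zero => simp
    | succ m ih =>
      rw [Function.iterate_succ', Set.image_comp]
      calc f '' (f^[m] '' A n) ⊆ f '' A n := Set.image_mono ih
        _ ⊆ A n := hinv n
  -- each A n is all of X
  have huniv : ∀ n, A n = Set.univ := by
    intro n
    have hdense : Dense (A n) := by
      rw [dense_iff_inter_open]
      intro V hV hVne
      obtain ⟨m, x, hx⟩ := htrans (interior (A n)) V isOpen_interior hV (hint n) hVne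
      exact ⟨x, hx.2, hiter n m (Set.image_mono interior_subset hx.1)⟩
    have := hdense.closure_eq
    rwa [(hclosed n).closure_eq] at this
  have : (⋂ n, A n) = Set.univ := by simp [huniv]
  rw [this, interior_univ]
  obtain ⟨x, _⟩ := hint 0
  exact ⟨x, trivial⟩
end

section
/- Let X be a metric space and f : X → X a continuous map such that the set R(f) of recurrent points of f is dense in X. If f is indecomposable, then f is topologically transitive. -/
/-- A self-map is indecomposable if for any two invariant closed sets with nonempty
interior, their intersection has nonempty interior. -/
def Indecomposable {Y : Type*} [TopologicalSpace Y] (g : Y → Y) : Prop :=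
  ∀ A B : Set Y, IsClosed A → IsClosed B → g '' A ⊆ A → g '' B ⊆ B →
    (interior A).Nonempty → (interior B).Nonempty → (interior (A ∩ B)).Nonempty

/-- A point `x` is recurrent for `g` if some subsequence of its orbit along a strictly
increasing sequence of positive integers converges back to `x`. -/
def RecurrentPt {Y : Type*} [TopologicalSpace Y] (g : Y → Y) (x : Y) : Prop :=
  ∃ n : ℕ → ℕ, StrictMono n ∧ (∀ k, 1 ≤ n k) ∧
    Filter.Tendsto (fun k => g^[n k] x) Filter.atTop (nhds x)

theorem indecomposable_implies_transitive_of_denseRecurrent {X : Type*} [MetricSpace X]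
    (f : X → X) (hf : Continuous f) (hrec : Dense {x : X | RecurrentPt f x})
    (hind : Indecomposable f) : TopTransitive f := by
  rw [TopTransitive]
  by_contra htrans
  push_neg at htrans
  obtain ⟨U, V, hU, hV, hUne, hVne, hUV⟩ := htrans
  set R : Set X := {x : X | RecurrentPt f x} with hR
  set G : Set X := ⋃ n : ℕ, f^[n] ⁻¹' V with hGdef
  have hGopen : IsOpen G := isOpen_iUnion fun n => hV.preimage (hf.iterate n)
  -- U is disjoint from G
  have hUG : U ⊆ Gᶜ := by
    intro x hx hxG
    obtain ⟨n, hn⟩ := Set.mem_iUnion.1 hxG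
    exact Set.eq_empty_iff_forall_notMem.1 (hUV n) _ ⟨⟨x, hx, rfl⟩, hn⟩
  -- Gᶜ is invariant
  have hCinv : f '' Gᶜ ⊆ Gᶜ := by
    rintro _ ⟨x, hx, rfl⟩ hfxG
    obtain ⟨n, hn⟩ := Set.mem_iUnion.1 hfxG
    refine hx (Set.mem_iUnion.2 ⟨n + 1, ?_⟩)
    simpa [Function.iterate_succ_apply] using hn
  have hVG : V ⊆ G := fun x hx => Set.mem_iUnion.2 ⟨0, by simpa using hx⟩
  -- recurrent points of G map into G
  have hRG : ∀ x ∈ G ∩ R, f x ∈ G := by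
    rintro x ⟨hxG, hxR⟩
    obtain ⟨m, hm⟩ := Set.mem_iUnion.1 hxG
    rcases Nat.eq_zero_or_pos m with h0 | hpos
    · subst h0
      simp only [Function.iterate_zero, Set.mem_preimage, id_eq] at hm
      obtain ⟨n, hmono, hpos', htend⟩ := hxR
      obtain ⟨k, hk⟩ := (htend.eventually (hV.mem_nhds hm)).exists
      refine Set.mem_iUnion.2 ⟨n k - 1, ?_⟩
      show f^[n k - 1] (f x) ∈ V
      have hnk : (n k - 1).succ = n k := by have := hpos' k; omega
      rw [← Function.iterate_succ_apply, hnk]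
      exact hk
    · refine Set.mem_iUnion.2 ⟨m - 1, ?_⟩
      show f^[m - 1] (f x) ∈ V
      have hmm : (m - 1).succ = m := by omega
      rw [← Function.iterate_succ_apply, hmm]
      exact hm
  -- closure G is invariant
  have hGcl : closure G = closure (G ∩ R) := by
    apply subset_antisymm
    · exact closure_minimal (hrec.open_subset_closure_inter hGopen) isClosed_closure
    · exact closure_mono Set.inter_subset_left
  have hDinv : f '' closure G ⊆ closure G := by
    calc f '' closure G = f '' closure (G ∩ R) := by rw [hGcl]
      _ ⊆ closure (f '' (G ∩ R)) := image_closure_subset_closure_image hf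
      _ ⊆ closure G := closure_mono (by rintro _ ⟨x, hx, rfl⟩; exact hRG x hx)
  -- apply indecomposability
  obtain ⟨x, hx⟩ := hind Gᶜ (closure G) hGopen.isClosed_compl isClosed_closure
    hCinv hDinv
    ⟨hUne.choose, interior_maximal hUG hU hUne.choose_spec⟩
    ⟨hVne.choose, interior_maximal (hVG.trans subset_closure) hV hVne.choose_spec⟩
  have hxcl : x ∈ closure G := (interior_subset hx).2
  obtain ⟨y, hyW, hyG⟩ := mem_closure_iff.1 hxcl _ isOpen_interior hx
  exact (interior_subset hyW).1 hyG
end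

section
/- Let X be a metric space and f : X → X a continuous map such that the set R(f) of recurrent points of f is dense in X. Then the following conditions are equivalent: (1) f is topologically transitive; (2) f is strongly indecomposable; (3) f is indecomposable. -/
/-- Invariance under iterates. -/
lemma iter_image_subset {Y : Type*} (g : Y → Y) {A : Set Y} (h : g '' A ⊆ A) :
    ∀ n, g^[n] '' A ⊆ A := by
  intro n
  induction n with
  | zero => simp
  | succ n ih =>
    rw [Function.iterate_succ', Set.image_comp]
    exact (Set.image_mono ih).trans h

lemma iter_mem_inv {Y : Type*} (g : Y → Y) {A : Set Y} (h : g '' A ⊆ A)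
    {x : Y} (hx : x ∈ A) (n : ℕ) : g^[n] x ∈ A :=
  iter_image_subset g h n ⟨x, hx, rfl⟩

/-- the closure of the forward orbit of a set is invariant. -/
lemma orbit_closure_inv {Y : Type*} [TopologicalSpace Y] {g : Y → Y} (hg : Continuous g)
    (U : Set Y) : g '' closure (⋃ n, g^[n] '' U) ⊆ closure (⋃ n, g^[n] '' U) := by
  refine (image_closure_subset_closure_image hg).trans (closure_mono ?_)
  rw [Set.image_iUnion]
  refine Set.iUnion_subset fun n => ?_
  rw [← Set.image_comp, ← Function.iterate_succ']
  exact Set.subset_iUnion (fun m => g^[m] '' U) (n + 1)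

theorem transitive_iff_stronglyIndecomposable_iff_indecomposable {X : Type*}
    [MetricSpace X] (f : X → X) (hf : Continuous f)
    (hrec : Dense {x : X | RecurrentPt f x}) :
    (TopTransitive f ↔ StronglyIndecomposable f) ∧
      (StronglyIndecomposable f ↔ Indecomposable f) := by
  have t_to_s : TopTransitive f → StronglyIndecomposable f := by
    intro hT A hcl hinv hint
    have hall : ∀ n, A n = Set.univ := by
      intro n
      have hdense : Dense (A n) := by
        rw [dense_iff_inter_open]
        intro V hV hVne
        obtain ⟨m, x, hx1, hx2⟩ := hT (interior (A n)) V isOpen_interior hV (hint n) hVne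
        exact ⟨x, hx2, iter_image_subset f (hinv n) m
          (Set.image_mono interior_subset hx1)⟩
      have := hdense.closure_eq
      rwa [(hcl n).closure_eq] at this
    have : (⋂ n, A n) = Set.univ := by simp [hall]
    rw [this, interior_univ]
    obtain ⟨x, -⟩ := hint 0
    exact ⟨x, Set.mem_univ x⟩
  have s_to_i : StronglyIndecomposable f → Indecomposable f := by
    intro hS A B hA hB hAi hBi hAint hBint
    have key := hS (fun n => if n = 0 then A else B)
      (fun n => by split <;> assumption)
      (fun n => by split <;> assumption)
      (fun n => by split <;> assumption)
    have : (⋂ n, if n = 0 then A else B) = A ∩ B := by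
      apply Set.Subset.antisymm
      · intro x hx
        have h0 := Set.mem_iInter.1 hx 0
        have h1 := Set.mem_iInter.1 hx 1
        simp at h0 h1
        exact ⟨h0, h1⟩
      · intro x hx
        refine Set.mem_iInter.2 fun n => ?_
        split
        · exact hx.1
        · exact hx.2
    rwa [this] at key
  have i_to_t : Indecomposable f → TopTransitive f := by
    intro hI U V hU hV hUne hVne
    by_contra hcon
    push_neg at hcon
    have hemp : ∀ n : ℕ, f^[n] '' U ∩ V = ∅ := hcon
    set A := closure (⋃ n, f^[n] '' U) with hAdef
    set B := closure (⋃ n, f^[n] '' V) with hBdef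
    have hUA : U ⊆ A := by
      have h0 : f^[0] '' U ⊆ A := (Set.subset_iUnion (fun m => f^[m] '' U) 0).trans subset_closure
      simpa using h0
    have hVB : V ⊆ B := by
      have h0 : f^[0] '' V ⊆ B := (Set.subset_iUnion (fun m => f^[m] '' V) 0).trans subset_closure
      simpa using h0
    have hAV : A ∩ V = ∅ := by
      have hdisj : Disjoint V (⋃ n, f^[n] '' U) := by
        rw [Set.disjoint_iUnion_right]
        intro n
        rw [Set.disjoint_iff_inter_eq_empty, Set.inter_comm]
        exact hemp n
      have := hdisj.closure_right hV
      rw [Set.disjoint_iff_inter_eq_empty, Set.inter_comm] at this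
      exact this
    have key := hI A B isClosed_closure isClosed_closure
      (orbit_closure_inv hf U) (orbit_closure_inv hf V)
      ⟨hUne.choose, interior_maximal hUA hU hUne.choose_spec⟩
      ⟨hVne.choose, interior_maximal hVB hV hVne.choose_spec⟩
    obtain ⟨w, hw⟩ := key
    -- w is in interior (A ∩ B) ⊆ B = closure of orbit of V
    have hwB : w ∈ B := (interior_subset hw).2
    have hmeet : ((interior (A ∩ B)) ∩ ⋃ n, f^[n] '' V).Nonempty := by
      rw [hBdef, mem_closure_iff] at hwB
      exact hwB _ isOpen_interior hw
    obtain ⟨y, hyW, hyO⟩ := hmeet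
    obtain ⟨m, v, hvV, hvy⟩ := Set.mem_iUnion.1 hyO
    -- V' := V ∩ f^[m] ⁻¹' interior (A ∩ B)
    have hV'open : IsOpen (V ∩ f^[m] ⁻¹' interior (A ∩ B)) :=
      hV.inter (isOpen_interior.preimage (hf.iterate m))
    have hV'ne : (V ∩ f^[m] ⁻¹' interior (A ∩ B)).Nonempty :=
      ⟨v, hvV, by rw [Set.mem_preimage, hvy]; exact hyW⟩
    obtain ⟨z, hzR, hzV, hzP⟩ := hrec.exists_mem_open hV'open hV'ne
    obtain ⟨n, hmono, -, htend⟩ := hzR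
    have hzA : z ∈ A := by
      refine isClosed_closure.mem_of_tendsto htend ?_
      filter_upwards [Filter.eventually_ge_atTop m] with k hk
      have h1 : f^[m] z ∈ A := (interior_subset hzP).1
      have : f^[n k - m] (f^[m] z) ∈ A :=
        iter_mem_inv f (orbit_closure_inv hf U) h1 _
      rwa [← Function.iterate_add_apply, Nat.sub_add_cancel (hk.trans (hmono.le_apply))] at this
    have : z ∈ A ∩ V := ⟨hzA, hzV⟩
    rw [hAV] at this
    exact this
  exact ⟨⟨t_to_s, fun hs => i_to_t (s_to_i hs)⟩, ⟨s_to_i, fun hi => t_to_s (i_to_t hi)⟩⟩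
end

section
/- Let X be a nonempty separable metric space which is a Baire space, and let f : X → X be a continuous map. If f is topologically transitive, then f is weakly indecomposable; that is, there exists a residual subset S ⊆ X such that ω(x) = ω(y) ≠ ∅ for all x, y ∈ S. -/
/-- The ω-limit set of a point: `ω(x) = ⋂ₙ closure {gᵏ(x) : k ≥ n}`. -/
def omegaSet {Y : Type*} [TopologicalSpace Y] (g : Y → Y) (x : Y) : Set Y :=
  ⋂ n : ℕ, closure {y | ∃ k, n ≤ k ∧ g^[k] x = y}

/-- A set is residual if it contains a dense Gδ set. -/
def ResidualSet {Y : Type*} [TopologicalSpace Y] (S : Set Y) : Prop :=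
  ∃ G : Set Y, G ⊆ S ∧ IsGδ G ∧ Dense G

/-- A self-map is weakly indecomposable if there is a residual set on which all points
have the same nonempty ω-limit set. -/
def WeaklyIndecomposable {Y : Type*} [TopologicalSpace Y] (g : Y → Y) : Prop :=
  ∃ S : Set Y, ResidualSet S ∧
    (∀ x ∈ S, ∀ y ∈ S, omegaSet g x = omegaSet g y) ∧
    (∀ x ∈ S, (omegaSet g x).Nonempty)

open Set Function TopologicalSpace

section Aux

variable {X : Type*} [MetricSpace X]

/-- If `q` is an isolated non-periodic point of a transitive system (with another point
around), then `q` has a unique preimage, which is again isolated, non-periodic and ≠ q. -/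
lemma succ_point (f : X → X) (hf : Continuous f) (htrans : TopTransitive f) {q : X}
    (hq : IsOpen ({q} : Set X)) (hnp : ∀ n, 1 ≤ n → f^[n] q ≠ q) (hX : ∃ x : X, x ≠ q) :
    ∃ q', f q' = q ∧ q' ≠ q ∧ IsOpen ({q'} : Set X) ∧ ∀ n, 1 ≤ n → f^[n] q' ≠ q' := by
  obtain ⟨x0, hx0⟩ := hX
  obtain ⟨n, z, ⟨y, hyU, rfl⟩, hzV⟩ :=
    htrans {q}ᶜ {q} isOpen_compl_singleton hq ⟨x0, hx0⟩ ⟨q, rfl⟩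
  have hfyq : f^[n] y = q := hzV
  have hn1 : 1 ≤ n := by
    rcases Nat.eq_zero_or_pos n with h0 | h1
    · subst h0; exact absurd hfyq hyU
    · exact h1
  set q' := f^[n - 1] y with hq'
  have hfq' : f q' = q := by
    have : f (f^[n - 1] y) = f^[(n - 1) + 1] y := (Function.iterate_succ_apply' f (n - 1) y).symm
    rw [hq', this, Nat.sub_add_cancel hn1, hfyq]
  have hne : q' ≠ q := by
    intro h
    exact hnp 1 le_rfl (by simpa [h] using hfq')
  have hnp' : ∀ m, 1 ≤ m → f^[m] q' ≠ q' := by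
    intro m hm h
    apply hnp m hm
    have : f^[m] (f q') = f q' := by
      rw [← Function.iterate_succ_apply, Function.iterate_succ_apply', h]
    rwa [hfq'] at this
  -- q' is isolated: the (open) preimage of {q} is exactly {q'}
  have hOopen : IsOpen (f ⁻¹' {q}) := hq.preimage hf
  have hq'O : q' ∈ f ⁻¹' {q} := by simp [hfq']
  have hsingle : f ⁻¹' {q} = {q'} := by
    apply Subset.antisymm
    · intro a ha
      by_contra hne'
      have haq' : a ≠ q' := by simpa using hne'
      obtain ⟨A, B, hA, hB, haA, hq'B, hAB⟩ := t2_separation haq'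
      have hW1 : IsOpen ((f ⁻¹' {q}) ∩ B) := hOopen.inter hB
      have hW2 : IsOpen ((f ⁻¹' {q}) ∩ A) := hOopen.inter hA
      obtain ⟨m, z, ⟨w, hw, rfl⟩, hz2⟩ :=
        htrans _ _ hW1 hW2 ⟨q', hq'O, hq'B⟩ ⟨a, ha, haA⟩
      have hm1 : 1 ≤ m := by
        rcases Nat.eq_zero_or_pos m with h0 | h1
        · subst h0
          simp only [Function.iterate_zero, id_eq] at hz2
          exact absurd (hAB.symm.ne_of_mem hw.2 hz2.2) (by simp)
        · exact h1
      have hfw : f w = q := hw.1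
      have hiter : f^[m] w = f^[m - 1] q := by
        have h1 : f^[m] w = f^[(m - 1) + 1] w := by rw [Nat.sub_add_cancel hm1]
        rw [h1, Function.iterate_succ_apply, hfw]
      apply hnp m hm1
      have hthis : f (f^[m - 1] q) = q := by
        have := hz2.1
        rwa [hiter] at this
      have h2 : f^[(m - 1) + 1] q = q := by
        rw [Function.iterate_succ_apply']
        exact hthis
      rwa [Nat.sub_add_cancel hm1] at h2
    · intro a ha
      simpa using (by simpa using ha : a = q') ▸ hq'O
  exact ⟨q', hfq', hne, hsingle ▸ hOopen, hnp'⟩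

/-- Key density lemma: in a transitive system, from every nonempty open set one can reach
every nonempty open set at arbitrarily large times. -/
lemma reach_late (f : X → X) (hf : Continuous f) (htrans : TopTransitive f) [Nonempty X] :
    ∀ U V : Set X, IsOpen U → IsOpen V → U.Nonempty → V.Nonempty →
      ∀ N : ℕ, ∃ k, N ≤ k ∧ ∃ x ∈ U, f^[k] x ∈ V := by
  by_cases hiso : ∃ p : X, IsOpen ({p} : Set X)
  · obtain ⟨p, hp⟩ := hiso
    by_cases hper : ∃ n, 1 ≤ n ∧ f^[n] p = p
    · -- X is a single finite periodic orbit
      obtain ⟨n, hn1, hnp⟩ := hper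
      have hmul : ∀ m, f^[n * m] p = p := by
        intro m
        induction m with
        | zero => simp
        | succ m ih => rw [Nat.mul_succ, Function.iterate_add_apply, hnp, ih]
      have hall : ∀ x : X, ∃ i, f^[i] p = x := by
        intro x
        set S : Set X := (fun i => f^[i] p) '' (Set.Iio n) with hS
        have hfin : S.Finite := (Set.finite_Iio n).image _
        have hdense : Dense S := by
          rw [dense_iff_inter_open]
          intro W hW hWne
          obtain ⟨m, z, ⟨w, hw, rfl⟩, hzW⟩ := htrans {p} W hp hW ⟨p, rfl⟩ hWne
          have hwp : w = p := hw
          subst hwp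
          have hdm : m = m % n + n * (m / n) := by
            rw [Nat.add_comm, Nat.div_add_mod]
          have hmem : f^[m] w = f^[m % n] w := by
            conv_lhs => rw [hdm]
            rw [Function.iterate_add_apply, hmul]
          exact ⟨f^[m] w, hzW, ⟨m % n, Nat.mod_lt _ (by omega), hmem.symm⟩⟩
        have hSuniv : S = Set.univ := by
          have h1 := hfin.isClosed.closure_eq
          have h2 := hdense.closure_eq
          rw [h1] at h2
          exact h2
        have hx : x ∈ S := hSuniv ▸ Set.mem_univ x
        obtain ⟨i, _, hi⟩ := hx
        exact ⟨i, hi⟩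
      intro U V hU hV hUne hVne N
      obtain ⟨u, hu⟩ := hUne
      obtain ⟨v, hv⟩ := hVne
      obtain ⟨i, hi⟩ := hall u
      obtain ⟨j, hj⟩ := hall v
      have hile2 : N + i ≤ n * (N + i) := Nat.le_mul_of_pos_left (N + i) (by omega)
      have hile : i ≤ n * (N + i) := le_trans (Nat.le_add_left i N) hile2
      refine ⟨j + n * (N + i) - i, by omega, u, hu, ?_⟩
      have hki : (j + n * (N + i) - i) + i = j + n * (N + i) := by omega
      have heq : f^[j + n * (N + i) - i] u = v :=
        calc f^[j + n * (N + i) - i] u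
            = f^[j + n * (N + i) - i] (f^[i] p) := by rw [hi]
          _ = f^[(j + n * (N + i) - i) + i] p := (Function.iterate_add_apply f _ i p).symm
          _ = f^[j + n * (N + i)] p := by rw [hki]
          _ = f^[j] (f^[n * (N + i)] p) := Function.iterate_add_apply f j _ p
          _ = f^[j] p := by rw [hmul]
          _ = v := hj
      rw [heq]
      exact hv
    · -- impossible: an isolated non-periodic point leads to a contradiction
      exfalso
      push_neg at hper
      have hX1 : ∃ x : X, x ≠ p := by
        by_contra hc
        push_neg at hc
        exact hper 1 le_rfl (by simp [hc (f p)])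
      obtain ⟨q1, hq1f, hq1ne, hq1open, hq1np⟩ := succ_point f hf htrans hp hper hX1
      obtain ⟨q2, hq2f, hq2ne, hq2open, hq2np⟩ := succ_point f hf htrans hq1open hq1np
        ⟨p, fun h => hq1ne h.symm⟩
      obtain ⟨m, z, ⟨w, hw, rfl⟩, hz2⟩ :=
        htrans {q1} {q2} hq1open hq2open ⟨q1, rfl⟩ ⟨q2, rfl⟩
      have hwq1 : w = q1 := hw
      subst hwq1
      have hmq2 : f^[m] w = q2 := hz2
      have hm1 : 1 ≤ m := by
        rcases Nat.eq_zero_or_pos m with h0 | h1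
        · subst h0; exact absurd hmq2.symm hq2ne
        · exact h1
      apply hq1np (m + 1) (by omega)
      rw [Function.iterate_succ_apply', hmq2, hq2f]
  · -- no isolated points
    push_neg at hiso
    have lemB : ∀ U V : Set X, IsOpen U → IsOpen V → U.Nonempty → V.Nonempty →
        ∃ m, 1 ≤ m ∧ ∃ x ∈ U, f^[m] x ∈ V := by
      intro U V hU hV hUne hVne
      obtain ⟨n, z, ⟨x, hxU, rfl⟩, hzV⟩ := htrans U V hU hV hUne hVne
      rcases Nat.eq_zero_or_pos n with h0 | h1
      · subst h0
        simp only [Function.iterate_zero, id_eq] at hzV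
        have hxW : x ∈ U ∩ V := ⟨hxU, hzV⟩
        have hy : ∃ y ∈ U ∩ V, y ≠ x := by
          by_contra hc
          push_neg at hc
          have hWx : U ∩ V = {x} :=
            Subset.antisymm (fun y hy => hc y hy) (singleton_subset_iff.mpr hxW)
          exact hiso x (hWx ▸ hU.inter hV)
        obtain ⟨y, hyW, hyx⟩ := hy
        obtain ⟨A, B, hA, hB, hyA, hxB, hAB⟩ := t2_separation hyx
        obtain ⟨m, z, ⟨w, hw, rfl⟩, hz2⟩ := htrans ((U ∩ V) ∩ B) ((U ∩ V) ∩ A)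
          ((hU.inter hV).inter hB) ((hU.inter hV).inter hA)
          ⟨x, hxW, hxB⟩ ⟨y, hyW, hyA⟩
        have hm1 : 1 ≤ m := by
          rcases Nat.eq_zero_or_pos m with h0 | h1
          · subst h0
            simp only [Function.iterate_zero, id_eq] at hz2
            exact absurd (hAB.symm.ne_of_mem hw.2 hz2.2) (by simp)
          · exact h1
        exact ⟨m, hm1, w, hw.1.1, hz2.1.2⟩
      · exact ⟨n, h1, x, hxU, hzV⟩
    have main : ∀ N : ℕ, ∀ U V : Set X, IsOpen U → IsOpen V → U.Nonempty → V.Nonempty →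
        ∃ k, N ≤ k ∧ ∃ x ∈ U, f^[k] x ∈ V := by
      intro N
      induction N with
      | zero =>
        intro U V hU hV hUne hVne
        obtain ⟨n, z, ⟨x, hxU, rfl⟩, hzV⟩ := htrans U V hU hV hUne hVne
        exact ⟨n, Nat.zero_le n, x, hxU, hzV⟩
      | succ N ih =>
        intro U V hU hV hUne hVne
        set D : Set X := ⋃ m, ⋃ (_ : N ≤ m), f^[m] ⁻¹' V with hD
        have hDopen : IsOpen D :=
          isOpen_iUnion fun m => isOpen_iUnion fun _ => hV.preimage (hf.iterate m)
        have hDne : D.Nonempty := by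
          obtain ⟨k, hk, x, _, hxv⟩ := ih univ V isOpen_univ hV univ_nonempty hVne
          exact ⟨x, mem_iUnion.mpr ⟨k, mem_iUnion.mpr ⟨hk, hxv⟩⟩⟩
        obtain ⟨k, hk1, x, hxU, hxD⟩ := lemB U D hU hDopen hUne hDne
        obtain ⟨m, hm⟩ := mem_iUnion.mp hxD
        obtain ⟨hmN, hmv⟩ := mem_iUnion.mp hm
        refine ⟨m + k, by omega, x, hxU, ?_⟩
        rw [Function.iterate_add_apply]
        exact hmv
    intro U V hU hV hUne hVne N
    exact main N U V hU hV hUne hVne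

end Aux

theorem transitive_implies_weaklyIndecomposable {X : Type*} [MetricSpace X]
    [Nonempty X] [TopologicalSpace.SeparableSpace X] [BaireSpace X]
    (f : X → X) (hf : Continuous f) (htrans : TopTransitive f) :
    WeaklyIndecomposable f := by
  haveI : SecondCountableTopology X := UniformSpace.secondCountable_of_separable X
  haveI : Countable ↥(countableBasis X) := (countable_countableBasis X).to_subtype
  have hreach := reach_late f hf htrans
  set T : Set X → ℕ → Set X :=
    fun V N => {x | V.Nonempty → ∃ k, N ≤ k ∧ f^[k] x ∈ V} with hT
  have hTopen : ∀ V ∈ countableBasis X, ∀ N, IsOpen (T V N) := by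
    intro V hVB N
    by_cases hV : V.Nonempty
    · have : T V N = ⋃ m, ⋃ (_ : N ≤ m), f^[m] ⁻¹' V := by
        ext x
        simp [hT, hV, mem_iUnion]
      rw [this]
      exact isOpen_iUnion fun m => isOpen_iUnion fun _ =>
        (isOpen_of_mem_countableBasis hVB).preimage (hf.iterate m)
    · have : T V N = univ := eq_univ_of_forall fun x hne => absurd hne hV
      rw [this]; exact isOpen_univ
  have hTdense : ∀ V ∈ countableBasis X, ∀ N, Dense (T V N) := by
    intro V hVB N
    by_cases hV : V.Nonempty
    · rw [dense_iff_inter_open]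
      intro U hU hUne
      obtain ⟨k, hk, x, hxU, hxv⟩ :=
        hreach U V hU (isOpen_of_mem_countableBasis hVB) hUne hV N
      exact ⟨x, hxU, fun _ => ⟨k, hk, hxv⟩⟩
    · have : T V N = univ := eq_univ_of_forall fun x hne => absurd hne hV
      rw [this]; exact dense_univ
  set G : Set X := ⋂ i : ↥(countableBasis X) × ℕ, T i.1 i.2 with hG
  have hGδ : IsGδ G := IsGδ.iInter fun i => (hTopen i.1 i.1.2 i.2).isGδ
  have hGdense : Dense G :=
    dense_iInter_of_isOpen (fun i => hTopen i.1 i.1.2 i.2) (fun i => hTdense i.1 i.1.2 i.2)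
  have homega : ∀ x ∈ G, omegaSet f x = univ := by
    intro x hx
    apply eq_univ_of_forall
    intro z
    refine mem_iInter.mpr fun N => ?_
    rw [mem_closure_iff]
    intro o ho hzo
    obtain ⟨V, hVB, hzV, hVo⟩ :=
      (isBasis_countableBasis X).exists_subset_of_mem_open hzo ho
    have hxT : x ∈ T V N := mem_iInter.mp hx ⟨⟨V, hVB⟩, N⟩
    obtain ⟨k, hk, hkv⟩ := hxT ⟨z, hzV⟩
    exact ⟨f^[k] x, hVo hkv, ⟨k, hk, rfl⟩⟩
  refine ⟨G, ⟨G, subset_rfl, hGδ, hGdense⟩, ?_, ?_⟩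
  · intro x hx y hy
    rw [homega x hx, homega y hy]
  · intro x hx
    rw [homega x hx]
    exact univ_nonempty
end

section
/- Let X be a separable metric space which is a Baire space, and let f : X → X be a continuous map such that the set R(f) of recurrent points of f is dense in X. If f is weakly indecomposable, then f is topologically transitive. -/
/-- Recurrence is equivalent to a countable family of return conditions. -/
theorem recurrentPt_iff_aux {X : Type*} [MetricSpace X] (f : X → X) (x : X) :
    RecurrentPt f x ↔ ∀ j m : ℕ, ∃ k, m + 1 ≤ k ∧ dist (f^[k] x) x < 1 / (j + 1) := by
  constructor
  · rintro ⟨n, hmono, hpos, htend⟩ j m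
    have hj : (0:ℝ) < 1 / (j + 1) := by positivity
    obtain ⟨N, hN⟩ := Metric.tendsto_atTop.mp htend (1 / (j + 1)) hj
    refine ⟨n (max N (m + 1)), ?_, hN _ (le_max_left _ _)⟩
    exact le_trans (le_max_right _ _) (hmono.le_apply)
  · intro h
    choose K h1 h2 using h
    set n : ℕ → ℕ := fun i => Nat.rec (K 0 0) (fun i prev => K (i + 1) prev) i with hn
    have hmono : StrictMono n := by
      apply strictMono_nat_of_lt_succ
      intro i
      have h3 : n (i + 1) = K (i + 1) (n i) := rfl
      have := h1 (i + 1) (n i)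
      omega
    have hd : ∀ i, dist (f^[n i] x) x < 1 / (i + 1) := by
      intro i
      cases i with
      | zero => exact h2 0 0
      | succ i => exact h2 (i + 1) (n i)
    refine ⟨n, hmono, fun k => ?_, ?_⟩
    · have h0 : 1 ≤ n 0 := by
        have h3 : n 0 = K 0 0 := rfl
        have := h1 0 0
        omega
      exact le_trans h0 (hmono.monotone (Nat.zero_le k))
    · rw [tendsto_iff_dist_tendsto_zero]
      apply squeeze_zero (fun t => dist_nonneg) (fun t => (hd t).le)
      exact tendsto_one_div_add_atTop_nhds_zero_nat

theorem recurrent_mem_omegaSet {X : Type*} [MetricSpace X] {f : X → X} {x : X}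
    (h : RecurrentPt f x) : x ∈ omegaSet f x := by
  obtain ⟨n, hmono, hpos, htend⟩ := h
  rw [omegaSet, Set.mem_iInter]
  intro m
  refine mem_closure_of_tendsto htend ?_
  filter_upwards [Filter.eventually_ge_atTop m] with i hi
  exact ⟨n i, le_trans hi hmono.le_apply, rfl⟩

theorem weaklyIndecomposable_implies_transitive {X : Type*} [MetricSpace X]
    [TopologicalSpace.SeparableSpace X] [BaireSpace X]
    (f : X → X) (hf : Continuous f) (hrec : Dense {x : X | RecurrentPt f x})
    (hweak : WeaklyIndecomposable f) : TopTransitive f := by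
  obtain ⟨S, ⟨G, hGS, hGδ, hGdense⟩, hSeq, -⟩ := hweak
  -- the recurrent set is Gδ
  have hRGδ : IsGδ {x : X | RecurrentPt f x} := by
    have heq : {x : X | RecurrentPt f x} =
        ⋂ p : ℕ × ℕ, ⋃ k ∈ {k : ℕ | p.2 + 1 ≤ k},
          {x : X | dist (f^[k] x) x < 1 / (p.1 + 1)} := by
      ext x
      simp only [Set.mem_setOf_eq, Set.mem_iInter, Set.mem_iUnion, recurrentPt_iff_aux,
        Prod.forall, exists_prop]
    rw [heq]
    refine .iInter_of_isOpen fun p => ?_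
    refine isOpen_biUnion fun k _ => ?_
    exact isOpen_lt (Continuous.dist (hf.iterate k) continuous_id) continuous_const
  have hRG : Dense ({x : X | RecurrentPt f x} ∩ G) :=
    hrec.inter_of_Gδ hRGδ hGδ hGdense
  -- main argument
  intro U V hU hV hUne hVne
  obtain ⟨u, huG, huU⟩ := hGdense.exists_mem_open hU hUne
  -- the common omega limit set
  set Ω := omegaSet f u with hΩ
  -- Ω contains all recurrent points of G, hence meets V
  obtain ⟨p, hpV, hpR, hpG⟩ : ∃ p, p ∈ V ∧ RecurrentPt f p ∧ p ∈ G := by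
    obtain ⟨p, ⟨hpR, hpG⟩, hpV⟩ := hRG.exists_mem_open hV hVne
    exact ⟨p, hpV, hpR, hpG⟩
  have hpΩ : p ∈ Ω := by
    have := recurrent_mem_omegaSet hpR
    rwa [hSeq p (hGS hpG) u (hGS huG)] at this
  -- p is in the closure of the orbit of u, and V is open, so the orbit of u meets V
  have hp_cl : p ∈ closure {y | ∃ k, 0 ≤ k ∧ f^[k] u = y} := by
    have := Set.mem_iInter.mp hpΩ 0
    exact this
  obtain ⟨y, hyV, k, -, hky⟩ := _root_.mem_closure_iff.mp hp_cl V hV hpV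
  exact ⟨k, f^[k] u, ⟨u, huU, rfl⟩, hky ▸ hyV⟩
end

section
/- Let X be a metric space and f : X → X a continuous map. Then f is topologically transitive and has a dense set of periodic points if and only if f is indecomposable and has a dense set of periodic points. -/
/-- The periodic points of `g` are dense. -/
def DensePeriodicPts {Y : Type*} [TopologicalSpace Y] (g : Y → Y) : Prop :=
  Dense {x : Y | ∃ n : ℕ, 1 ≤ n ∧ g^[n] x = x}

private lemma inv_iter {X : Type*} {f : X → X} {A : Set X} (hA : f '' A ⊆ A) :
    ∀ j x, x ∈ A → f^[j] x ∈ A := by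
  intro j
  induction j with
  | zero => intro x hx; simpa using hx
  | succ j ih =>
      intro x hx
      rw [Function.iterate_succ_apply']
      exact hA ⟨_, ih x hx, rfl⟩

private lemma periodic_pullback {X : Type*} {f : X → X} {p : X} {d : ℕ}
    (hd : 1 ≤ d) (hp : f^[d] p = p) (n : ℕ) : ∃ j, f^[j] (f^[n] p) = p := by
  refine ⟨d * (n + 1) - n, ?_⟩
  rw [← Function.iterate_add_apply]
  have hle : n ≤ d * (n + 1) :=
    le_trans (Nat.le_succ n) (Nat.le_mul_of_pos_left (n + 1) hd)
  rw [Nat.sub_add_cancel hle]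
  exact (Function.IsPeriodicPt.mul_const (hp : Function.IsPeriodicPt f d p) (n + 1))

theorem transitive_and_densePeriodic_iff_indecomposable_and_densePeriodic
    {X : Type*} [MetricSpace X] (f : X → X) (hf : Continuous f) :
    (TopTransitive f ∧ DensePeriodicPts f) ↔ (Indecomposable f ∧ DensePeriodicPts f) := by
  constructor
  · rintro ⟨htr, hdp⟩
    refine ⟨?_, hdp⟩
    intro A B hAc hBc hAi hBi hAne hBne
    obtain ⟨n, y, ⟨x, hxU, rfl⟩, hyV⟩ :=
      htr (interior A) (interior B) isOpen_interior isOpen_interior hAne hBne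
    -- W : open neighborhood of x inside interior A mapped into interior B by f^[n]
    set W := interior A ∩ f^[n] ⁻¹' interior B with hW
    have hWopen : IsOpen W :=
      isOpen_interior.inter ((hf.iterate n).isOpen_preimage _ isOpen_interior)
    have hxW : x ∈ W := ⟨hxU, hyV⟩
    -- every periodic point in W lies in A ∩ B
    have hkey : W ∩ {x : X | ∃ n : ℕ, 1 ≤ n ∧ f^[n] x = x} ⊆ A ∩ B := by
      rintro p ⟨⟨hpA, hpB⟩, d, hd, hpd⟩
      refine ⟨interior_subset hpA, ?_⟩
      obtain ⟨j, hj⟩ := periodic_pullback hd hpd n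
      rw [← hj]
      exact inv_iter hBi j _ (interior_subset hpB)
    have hsub : W ⊆ A ∩ B := by
      intro w hw
      have := hdp.open_subset_closure_inter hWopen hw
      have h2 : closure (W ∩ {x : X | ∃ n : ℕ, 1 ≤ n ∧ f^[n] x = x}) ⊆ A ∩ B :=
        (hAc.inter hBc).closure_subset_iff.mpr hkey
      exact h2 this
    exact ⟨x, interior_maximal hsub hWopen hxW⟩
  · rintro ⟨hind, hdp⟩
    refine ⟨?_, hdp⟩
    intro U V hU hV hUne hVne
    by_contra hcon
    push_neg at hcon
    set A := closure (⋃ n : ℕ, f^[n] '' U) with hA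
    set B := closure (⋃ n : ℕ, f^[n] '' V) with hB
    have orbit_inv : ∀ S : Set X, f '' closure (⋃ n : ℕ, f^[n] '' S) ⊆
        closure (⋃ n : ℕ, f^[n] '' S) := by
      intro S
      refine (Set.Subset.trans (image_closure_subset_closure_image hf) ?_)
      apply closure_mono
      rw [Set.image_iUnion]
      apply Set.iUnion_subset
      intro n
      rw [← Set.image_comp, ← Function.iterate_succ']
      exact Set.subset_iUnion (fun n => f^[n] '' S) (n + 1)
    have subA : ∀ S : Set X, S ⊆ closure (⋃ n : ℕ, f^[n] '' S) := by
      intro S x hx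
      apply subset_closure
      exact Set.mem_iUnion.mpr ⟨0, by simpa using hx⟩
    have hAV : A ⊆ Vᶜ := by
      rw [hA]
      apply closure_minimal ?_ hV.isClosed_compl
      apply Set.iUnion_subset
      intro n
      rw [Set.subset_compl_iff_disjoint_right, Set.disjoint_iff_inter_eq_empty]
      exact hcon n
    have hWne : (interior (A ∩ B)).Nonempty := by
      apply hind A B isClosed_closure isClosed_closure (orbit_inv U) (orbit_inv V)
      · exact hUne.mono (interior_maximal (subA U) hU)
      · exact hVne.mono (interior_maximal (subA V) hV)
    obtain ⟨w, hw⟩ := hWne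
    set W := interior (A ∩ B) with hWdef
    have hWopen : IsOpen W := isOpen_interior
    have hwB : w ∈ B := (interior_subset hw).2
    have hmeet : (W ∩ ⋃ n : ℕ, f^[n] '' V).Nonempty :=
      (_root_.mem_closure_iff.mp hwB) W hWopen hw
    obtain ⟨y, hyW, hy⟩ := hmeet
    obtain ⟨m, hy⟩ := Set.mem_iUnion.mp hy
    obtain ⟨z, hzV, rfl⟩ := hy
    -- V' : open nbhd of z in V mapped into W by f^[m]
    set V' := V ∩ f^[m] ⁻¹' W with hV'
    have hV'open : IsOpen V' := hV.inter ((hf.iterate m).isOpen_preimage _ hWopen)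
    have hzV' : z ∈ V' := ⟨hzV, hyW⟩
    obtain ⟨p, hpPer, hpV'⟩ := hdp.exists_mem_open hV'open ⟨z, hzV'⟩
    obtain ⟨d, hd, hpd⟩ := hpPer
    have hfmA : f^[m] p ∈ A := (interior_subset hpV'.2).1
    obtain ⟨j, hj⟩ := periodic_pullback hd hpd m
    have hpA : p ∈ A := hj ▸ inv_iter (orbit_inv U) j _ hfmA
    exact hAV hpA hpV'.1
end

section
/- Let X be a metric space with infinitely many points and f : X → X a continuous map. Then f is Devaney chaotic (i.e., f is topologically transitive, has a dense set of periodic points, and has sensitive dependence on initial conditions) if and only if f is indecomposable and has a dense set of periodic points. -/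
/-- Sensitive dependence on initial conditions. -/
def Sensitive {Y : Type*} [MetricSpace Y] (g : Y → Y) : Prop :=
  ∃ δ : ℝ, 0 < δ ∧ ∀ x : Y, ∀ ε : ℝ, 0 < ε →
    ∃ y : Y, dist x y < ε ∧ ∃ n : ℕ, δ < dist (g^[n] x) (g^[n] y)

/-- Devaney chaos: transitivity, dense periodic points, and sensitivity. -/
def DevaneyChaotic {Y : Type*} [MetricSpace Y] (g : Y → Y) : Prop :=
  TopTransitive g ∧ DensePeriodicPts g ∧ Sensitive g

section Aux

open Function Metric Set

variable {X : Type*} [MetricSpace X] (f : X → X)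

/-- Invariance is preserved by iterates. -/
lemma aux_iter_image_subset {A : Set X} (hA : f '' A ⊆ A) :
    ∀ n, f^[n] '' A ⊆ A := by
  intro n
  induction n with
  | zero => simp
  | succ n ih =>
    rw [Function.iterate_succ', Set.image_comp]
    exact (Set.image_mono ih).trans hA

/-- From any point on the cycle of a periodic point one can iterate back to it. -/
lemma aux_period_back {x : X} {n : ℕ} (hn1 : 1 ≤ n) (hn : f^[n] x = x) (i : ℕ) :
    f^[i * (n - 1)] (f^[i] x) = x := by
  obtain ⟨m, rfl⟩ := Nat.exists_eq_add_of_le hn1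
  rw [← Function.iterate_add_apply]
  have h2 : i * (1 + m - 1) + i = i * (1 + m) := by
    have : 1 + m - 1 = m := by omega
    rw [this]; ring
  rw [h2]
  exact (show Function.IsPeriodicPt f (1 + m) x from hn).const_mul i

/-- With transitivity, a closed invariant set with nonempty interior is everything. -/
lemma aux_invariant_eq_univ (hT : TopTransitive f) {A : Set X}
    (hAc : IsClosed A) (hAinv : f '' A ⊆ A) (hAint : (interior A).Nonempty) :
    A = Set.univ := by
  by_contra h
  have hVne : Aᶜ.Nonempty := by
    rw [Set.nonempty_compl]; exact fun he => h (by rw [he])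
  obtain ⟨k, x, ⟨y, hy, rfl⟩, hxV⟩ :=
    hT (interior A) Aᶜ isOpen_interior hAc.isOpen_compl hAint hVne
  exact hxV (aux_iter_image_subset f hAinv k ⟨y, interior_subset hy, rfl⟩)

lemma aux_transitive (hf : Continuous f) (hI : Indecomposable f)
    (hP : DensePeriodicPts f) : TopTransitive f := by
  intro U V hU hV hUne hVne
  by_contra h
  push_neg at h
  set P : Set X := {x : X | ∃ n : ℕ, 1 ≤ n ∧ f^[n] x = x} with hPdef
  set S : Set X := ⋃ p ∈ P ∩ V, Set.range (fun i => f^[i] p) with hSdef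
  set A : Set X := closure (⋃ n, f^[n] '' U) with hAdef
  set B : Set X := closure S with hBdef
  -- invariance of A
  have hTsub : f '' (⋃ n, f^[n] '' U) ⊆ ⋃ n, f^[n] '' U := by
    rintro _ ⟨x, hx, rfl⟩
    simp only [Set.mem_iUnion] at hx ⊢
    obtain ⟨n, y, hy, rfl⟩ := hx
    exact ⟨n + 1, y, hy, by rw [Function.iterate_succ', Function.comp_apply]⟩
  have hAinv : f '' A ⊆ A :=
    (image_closure_subset_closure_image hf).trans (closure_mono hTsub)
  -- invariance of B
  have hSsub : f '' S ⊆ S := by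
    rintro _ ⟨x, hx, rfl⟩
    simp only [hSdef, Set.mem_iUnion, Set.mem_range] at hx ⊢
    obtain ⟨p, hp, i, rfl⟩ := hx
    exact ⟨p, hp, i + 1, by rw [Function.iterate_succ', Function.comp_apply]⟩
  have hBinv : f '' B ⊆ B :=
    (image_closure_subset_closure_image hf).trans (closure_mono hSsub)
  -- interiors nonempty
  have hUA : U ⊆ A := by
    intro x hx
    exact subset_closure (Set.mem_iUnion.mpr ⟨0, by simpa using hx⟩)
  have hAint : (interior A).Nonempty :=
    hUne.mono ((hU.subset_interior_iff).mpr hUA)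
  have hVB : V ⊆ B := by
    intro x hx
    have h1 : x ∈ closure (V ∩ P) := hP.open_subset_closure_inter hV hx
    refine closure_mono ?_ h1
    rintro y ⟨hyV, hyP⟩
    exact Set.mem_biUnion ⟨hyP, hyV⟩ ⟨0, rfl⟩
  have hBint : (interior B).Nonempty :=
    hVne.mono ((hV.subset_interior_iff).mpr hVB)
  obtain ⟨w, hw⟩ := hI A B isClosed_closure isClosed_closure hAinv hBinv hAint hBint
  -- w is in closure S and interior (A ∩ B) is an open neighborhood, so meet S
  have hwS : w ∈ closure S := (interior_subset hw).2
  obtain ⟨y, hyI, hyS⟩ :=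
    _root_.mem_closure_iff.mp hwS (interior (A ∩ B)) isOpen_interior hw
  have hyA : y ∈ A := (interior_subset hyI).1
  simp only [hSdef, Set.mem_iUnion, Set.mem_range] at hyS
  obtain ⟨p, ⟨⟨np, hnp1, hnp⟩, hpV⟩, i, rfl⟩ := hyS
  -- p itself lies in A
  have hpA : p ∈ A := by
    have := aux_iter_image_subset f hAinv (i * (np - 1)) ⟨f^[i] p, hyA, rfl⟩
    rwa [aux_period_back f hnp1 hnp i] at this
  -- but A is disjoint from V
  have hdisj : V ∩ (⋃ n, f^[n] '' U) = ∅ := by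
    ext z
    simp only [Set.mem_inter_iff, Set.mem_iUnion, Set.mem_empty_iff_false, iff_false]
    rintro ⟨hzV, n, hz⟩
    exact Set.eq_empty_iff_forall_notMem.mp (h n) z ⟨hz, hzV⟩
  have : p ∈ closure (V ∩ ⋃ n, f^[n] '' U) := hV.inter_closure ⟨hpV, hpA⟩
  rw [hdisj, closure_empty] at this
  exact this

lemma aux_sensitive [Infinite X] (hf : Continuous f) (hT : TopTransitive f)
    (hP : DensePeriodicPts f) : Sensitive f := by
  classical
  set P : Set X := {x : X | ∃ n : ℕ, 1 ≤ n ∧ f^[n] x = x} with hPdef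
  have hPdense : Dense P := hP
  -- P is infinite
  have hPinf : P.Infinite := by
    intro hfin
    have hcl : P = Set.univ := by
      rw [← hPdense.closure_eq, hfin.isClosed.closure_eq]
    exact Set.infinite_univ (hcl ▸ hfin)
  obtain ⟨p, hpP⟩ := hPinf.nonempty
  obtain ⟨np, hnp1, hnp⟩ := hpP
  -- the orbit of p
  set Op : Set X := (fun i => f^[i] p) '' (Set.Iio np) with hOp
  have hOpfin : Op.Finite := (Set.finite_Iio np).image _
  have hOpmem : ∀ i, f^[i] p ∈ Op := by
    intro i
    have h1 : f^[i % np] p = f^[i] p :=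
      (show Function.IsPeriodicPt f np p from hnp).iterate_mod_apply i
    exact ⟨i % np, Nat.mod_lt i (by omega), h1⟩
  -- a periodic point off the orbit of p
  obtain ⟨q, hqP, hqOp⟩ := (hPinf.diff hOpfin).nonempty
  obtain ⟨nq, hnq1, hnq⟩ := hqP
  -- the two orbits are disjoint
  have horb : ∀ i j, f^[i] p ≠ f^[j] q := by
    intro i j heq
    apply hqOp
    have hback : f^[j * (nq - 1)] (f^[j] q) = q := aux_period_back f hnq1 hnq j
    rw [← heq, ← Function.iterate_add_apply] at hback
    rw [← hback]
    exact hOpmem _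
  -- minimal distance between the orbits
  have hprodne : ((Finset.range np) ×ˢ (Finset.range nq)).Nonempty :=
    Finset.nonempty_product.mpr
      ⟨Finset.nonempty_range_iff.mpr (by omega), Finset.nonempty_range_iff.mpr (by omega)⟩
  set T : Finset ℝ := ((Finset.range np) ×ˢ (Finset.range nq)).image
      (fun ij => dist (f^[ij.1] p) (f^[ij.2] q)) with hTdef
  have hTne : T.Nonempty := hprodne.image _
  set δ0 : ℝ := T.min' hTne with hδ0
  have hδ0pos : 0 < δ0 := by
    obtain ⟨ij, _, hval⟩ := Finset.mem_image.mp (T.min'_mem hTne)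
    rw [hδ0, ← hval]
    exact dist_pos.mpr (horb _ _)
  have hδ0le : ∀ i j, δ0 ≤ dist (f^[i] p) (f^[j] q) := by
    intro i j
    have h1 : f^[i % np] p = f^[i] p :=
      (show Function.IsPeriodicPt f np p from hnp).iterate_mod_apply i
    have h2 : f^[j % nq] q = f^[j] q :=
      (show Function.IsPeriodicPt f nq q from hnq).iterate_mod_apply j
    rw [← h1, ← h2]
    exact T.min'_le _ (Finset.mem_image.mpr
      ⟨(i % np, j % nq), Finset.mem_product.mpr
        ⟨Finset.mem_range.mpr (Nat.mod_lt i (by omega)),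
         Finset.mem_range.mpr (Nat.mod_lt j (by omega))⟩, rfl⟩)
  -- sensitivity constant
  refine ⟨δ0 / 8, by linarith, ?_⟩
  intro x ε hε
  set δ : ℝ := δ0 / 8 with hδdef
  set ε' : ℝ := min ε δ with hε'
  have hε'pos : 0 < ε' := lt_min hε (by rw [hδdef]; linarith)
  have hε'le : ε' ≤ ε := min_le_left _ _
  have hε'δ : ε' ≤ δ := min_le_right _ _
  -- a periodic orbit staying far from x
  have hfar : ∃ c, (∃ nc : ℕ, 1 ≤ nc ∧ f^[nc] c = c) ∧
      ∀ i, 4 * δ ≤ dist x (f^[i] c) := by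
    by_cases hcase : ∀ i, 4 * δ ≤ dist x (f^[i] p)
    · exact ⟨p, ⟨np, hnp1, hnp⟩, hcase⟩
    · push_neg at hcase
      obtain ⟨i0, hi0⟩ := hcase
      refine ⟨q, ⟨nq, hnq1, hnq⟩, fun j => ?_⟩
      have h1 := hδ0le i0 j
      have h2 := dist_triangle (f^[i0] p) x (f^[j] q)
      have h3 : dist (f^[i0] p) x = dist x (f^[i0] p) := dist_comm _ _
      rw [hδdef] at hi0 ⊢
      linarith
  obtain ⟨c, ⟨nc, hnc1, hnc⟩, hc⟩ := hfar
  -- a periodic point near x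
  obtain ⟨r, hrP, hrx⟩ := Metric.mem_closure_iff.mp (hPdense x) ε' hε'pos
  obtain ⟨n, hn1, hnr⟩ := hrP
  -- the open set W around c
  set W : Set X := ⋂ i ∈ Finset.range (n + 1), f^[i] ⁻¹' (Metric.ball (f^[i] c) δ)
    with hWdef
  have hWopen : IsOpen W :=
    isOpen_biInter_finset (fun i _ => (Metric.isOpen_ball).preimage (hf.iterate i))
  have hcW : c ∈ W := by
    refine Set.mem_iInter₂.mpr (fun i _ => ?_)
    exact Metric.mem_ball_self (by rw [hδdef]; linarith)
  -- transitivity from the ball around x into W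
  obtain ⟨k, _, ⟨z, hzball, rfl⟩, hzW⟩ :=
    hT (Metric.ball x ε') W Metric.isOpen_ball hWopen
      ⟨x, Metric.mem_ball_self hε'pos⟩ ⟨c, hcW⟩
  -- select a multiple m of n with k < m ≤ k + n
  set a : ℕ := k / n with ha
  set m : ℕ := a * n + n with hm
  have hnpos : 0 < n := by omega
  have hkm : k < m := by
    calc k = n * (k / n) + k % n := (Nat.div_add_mod k n).symm
      _ < n * (k / n) + n := by have := Nat.mod_lt k hnpos; omega
      _ = m := by rw [hm, ha]; ring
  set d : ℕ := m - k with hd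
  have hd1 : 1 ≤ d := by omega
  have hdn : d ≤ n := by
    have h1 : a * n ≤ k := Nat.div_mul_le_self k n
    have h2 : m ≤ n + k := by
      calc m = a * n + n := rfl
        _ ≤ k + n := Nat.add_le_add_right h1 n
        _ = n + k := Nat.add_comm _ _
    exact Nat.sub_le_iff_le_add.mpr h2
  have hdk : d + k = m := Nat.sub_add_cancel (le_of_lt hkm)
  -- f^[m] r = r
  have hmr : f^[m] r = r := by
    have : m = (a + 1) * n := by rw [hm]; ring
    rw [this]
    exact (show Function.IsPeriodicPt f n r from hnr).const_mul (a + 1)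
  -- f^[m] z is δ-close to f^[d] c
  have hzd : dist (f^[m] z) (f^[d] c) < δ := by
    have h1 : f^[k] z ∈ f^[d] ⁻¹' (Metric.ball (f^[d] c) δ) := by
      have := Set.mem_iInter₂.mp hzW d (Finset.mem_range.mpr (by omega))
      exact this
    have h2 : f^[d] (f^[k] z) = f^[m] z := by
      rw [← Function.iterate_add_apply, hdk]
    rw [← h2]
    exact h1
  -- distance facts
  have hxz : dist x z < ε' := by
    have := Metric.mem_ball.mp hzball; rwa [dist_comm] at this
  have hfard : 4 * δ ≤ dist x (f^[d] c) := hc d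
  have ht1 : dist x (f^[d] c) ≤ dist x r + dist r (f^[m] z) + dist (f^[m] z) (f^[d] c) :=
    dist_triangle4 _ _ _ _
  have ht2 : dist r (f^[m] z) ≤ dist r (f^[m] x) + dist (f^[m] x) (f^[m] z) :=
    dist_triangle _ _ _
  have hcomm : dist r (f^[m] x) = dist (f^[m] x) r := dist_comm _ _
  by_cases hc1 : δ < dist (f^[m] x) r
  · exact ⟨r, lt_of_lt_of_le hrx hε'le, m, by rwa [hmr]⟩
  · push_neg at hc1
    refine ⟨z, lt_of_lt_of_le hxz hε'le, m, ?_⟩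
    have hrxδ : dist x r < δ := lt_of_lt_of_le hrx hε'δ
    linarith

end Aux

theorem devaneyChaotic_iff_indecomposable_and_densePeriodic
    {X : Type*} [MetricSpace X] [Infinite X] (f : X → X) (hf : Continuous f) :
    DevaneyChaotic f ↔ (Indecomposable f ∧ DensePeriodicPts f) := by
  constructor
  · rintro ⟨hT, hP, -⟩
    refine ⟨?_, hP⟩
    intro A B hAc hBc hAi hBi hAint hBint
    rw [aux_invariant_eq_univ f hT hAc hAi hAint,
        aux_invariant_eq_univ f hT hBc hBi hBint]
    simp only [Set.univ_inter, interior_univ]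
    exact Set.univ_nonempty
  · rintro ⟨hI, hP⟩
    have hT := aux_transitive f hf hI hP
    exact ⟨hT, hP, aux_sensitive f hf hT hP⟩
end

section
/- Let X be a separable metric space which is a Baire space and has infinitely many points, and let f : X → X be a continuous map. Then f is Devaney chaotic (i.e., f is topologically transitive, has a dense set of periodic points, and has sensitive dependence on initial conditions) if and only if f is weakly indecomposable and has a dense set of periodic points. -/
open Set Topology Filter TopologicalSpace Metric Function

section Aux

variable {X : Type*} [MetricSpace X] {f : X → X}

/-- Iterating a period. -/
private lemma periodic_iterate {x : X} {m : ℕ} (hm : f^[m] x = x) (t : ℕ) :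
    f^[m * t] x = x := by
  rw [Function.iterate_mul]; exact Function.IsFixedPt.iterate hm t

/-- Weak indecomposability together with dense periodic points gives transitivity. -/
private lemma transitive_of_wi [SecondCountableTopology X] [BaireSpace X]
    (hf : Continuous f) (hwi : WeaklyIndecomposable f) (hp : DensePeriodicPts f) :
    TopTransitive f := by
  obtain ⟨S, ⟨G, hGS, hGdelta, hGd⟩, hsame, -⟩ := hwi
  set B := countableBasis X with hB
  -- the set of points entering `V` at some time `≥ n`
  set U : Set X → ℕ → Set X := fun V n => ⋃ k, ⋃ (_ : n ≤ k), f^[k] ⁻¹' V with hU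
  have hUopen : ∀ V : Set X, IsOpen V → ∀ n, IsOpen (U V n) := fun V hV n =>
    isOpen_iUnion fun k => isOpen_iUnion fun _ => hV.preimage (hf.iterate k)
  have hWopen : ∀ V ∈ B, ∀ n : ℕ, IsOpen (U V n ∪ (closure V)ᶜ) := fun V hV n =>
    (hUopen V (isOpen_of_mem_countableBasis hV) n).union isClosed_closure.isOpen_compl
  have hWdense : ∀ V ∈ B, ∀ n : ℕ, Dense (U V n ∪ (closure V)ᶜ) := by
    intro V hV n
    rw [dense_iff_inter_open]
    intro O hO hOne
    by_cases hOV : (O ∩ V).Nonempty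
    · obtain ⟨q, ⟨hqO, hqV⟩, m, hm1, hmq⟩ :=
        hp.inter_open_nonempty _ (hO.inter (isOpen_of_mem_countableBasis hV)) hOV
      refine ⟨q, hqO, Or.inl ?_⟩
      refine mem_iUnion.2 ⟨m * n, mem_iUnion.2 ⟨Nat.le_mul_of_pos_left n hm1, ?_⟩⟩
      show f^[m * n] q ∈ V
      rw [periodic_iterate hmq n]; exact hqV
    · obtain ⟨o, hoO⟩ := hOne
      refine ⟨o, hoO, Or.inr fun hoc => ?_⟩
      have : O ∩ closure V ⊆ closure (O ∩ V) := hO.inter_closure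
      rw [not_nonempty_iff_eq_empty.1 hOV, closure_empty] at this
      exact this ⟨hoO, hoc⟩
  -- the residual set of recurrent points in `G`
  set R : Set X := G ∩ ⋂ V ∈ B, ⋂ n : ℕ, (U V n ∪ (closure V)ᶜ) with hR
  have hres : R ∈ residual X := by
    refine inter_mem (mem_residual.2 ⟨G, subset_rfl, hGdelta, hGd⟩) ?_
    refine (countable_bInter_mem (countable_countableBasis X)).2 fun V hV => ?_
    refine countable_iInter_mem.2 fun n => ?_
    exact mem_residual.2 ⟨_, subset_rfl, (hWopen V hV n).isGδ, hWdense V hV n⟩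
  have hrec : ∀ x ∈ R, x ∈ omegaSet f x := by
    intro x hx
    refine mem_iInter.2 fun n => Metric.mem_closure_iff.2 fun ε hε => ?_
    obtain ⟨V, hVB, hxV, hVb⟩ :=
      (isBasis_countableBasis X).exists_subset_of_mem_open (mem_ball_self hε) isOpen_ball
    have hx2 : x ∈ U V n ∪ (closure V)ᶜ := by
      have := mem_iInter.1 (mem_iInter₂.1 hx.2 V hVB) n
      exact this
    rcases hx2 with h | h
    · obtain ⟨k, hk⟩ := mem_iUnion.1 h
      obtain ⟨hkn, hkV⟩ := mem_iUnion.1 hk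
      refine ⟨f^[k] x, ⟨k, hkn, rfl⟩, ?_⟩
      have : f^[k] x ∈ ball x ε := hVb hkV
      rwa [mem_ball, dist_comm] at this
    · exact absurd (subset_closure hxV) h
  intro Uo Vo hUo hVo hUne hVne
  obtain ⟨x, hxU, hxR⟩ := (dense_of_mem_residual hres).inter_open_nonempty Uo hUo hUne
  obtain ⟨y, hyV, hyR⟩ := (dense_of_mem_residual hres).inter_open_nonempty Vo hVo hVne
  have hyx : y ∈ omegaSet f x := by
    have h1 : y ∈ omegaSet f y := hrec y hyR
    rwa [hsame x (hGS hxR.1) y (hGS hyR.1)]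
  have h0 : y ∈ closure {z | ∃ k, 0 ≤ k ∧ f^[k] x = z} := mem_iInter.1 hyx 0
  obtain ⟨z, hzV, k, -, hk⟩ := mem_closure_iff.1 h0 Vo hVo hyV
  exact ⟨k, z, ⟨x, hxU, hk⟩, hzV⟩

/-- Transitivity plus dense periodic points on an infinite space gives sensitivity
(Banks–Brooks–Cairns–Davis–Stacey). -/
private lemma sensitive_of_trans [Infinite X]
    (hf : Continuous f) (ht : TopTransitive f) (hp : DensePeriodicPts f) :
    Sensitive f := by
  classical
  have hXne : Nonempty X := inferInstance
  -- one periodic point p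
  obtain ⟨p, mp, hmp1, hmpp⟩ := hp.nonempty
  -- the (finite) orbit of a periodic point
  have hitermod : ∀ (z : X) (m : ℕ), f^[m] z = z → ∀ i, f^[i] z = f^[i % m] z := by
    intro z m hz i
    conv_lhs => rw [show i = i % m + m * (i / m) from (Nat.mod_add_div i m).symm]
    rw [Function.iterate_add_apply, periodic_iterate hz]
  have horbfin : ∀ (z : X) (m : ℕ), 0 < m → f^[m] z = z →
      (Set.range fun i => f^[i] z).Finite := by
    intro z m hm hz
    refine Set.Finite.subset ((Set.finite_Iio m).image fun i => f^[i] z) ?_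
    rintro _ ⟨i, rfl⟩
    exact ⟨i % m, Nat.mod_lt _ hm, (hitermod z m hz i).symm⟩
  have horbmem : ∀ (z : X) (j s : ℕ),
      f^[s] (f^[j] z) ∈ Set.range fun i => f^[i] z := by
    intro z j s
    exact ⟨s + j, Function.iterate_add_apply f s j z⟩
  -- a second periodic point with disjoint orbit
  have hqex : ∃ q, (∃ n, 1 ≤ n ∧ f^[n] q = q) ∧ q ∉ Set.range fun i => f^[i] p := by
    by_contra hcon
    push_neg at hcon
    have hsub : {x : X | ∃ n, 1 ≤ n ∧ f^[n] x = x} ⊆ Set.range fun i => f^[i] p :=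
      fun x hx => hcon x hx
    have hclosed : IsClosed (Set.range fun i => f^[i] p) :=
      (horbfin p mp hmp1 hmpp).isClosed
    have huniv : (univ : Set X) ⊆ Set.range fun i => f^[i] p := by
      calc (univ : Set X) = closure {x : X | ∃ n, 1 ≤ n ∧ f^[n] x = x} := hp.closure_eq.symm
        _ ⊆ closure (Set.range fun i => f^[i] p) := closure_mono hsub
        _ = _ := hclosed.closure_eq
    have : Finite X := Set.finite_univ_iff.1 ((horbfin p mp hmp1 hmpp).subset huniv)
    exact not_finite X
  obtain ⟨q, ⟨mq, hmq1, hmqq⟩, hqOp⟩ := hqex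
  set Op := Set.range fun i => f^[i] p with hOp
  set Oq := Set.range fun i => f^[i] q with hOq
  have hOpfin := horbfin p mp hmp1 hmpp
  have hOqfin := horbfin q mq hmq1 hmqq
  have hdisj : ∀ a ∈ Op, ∀ b ∈ Oq, a ≠ b := by
    rintro _ ⟨i, rfl⟩ _ ⟨j, rfl⟩ h
    apply hqOp
    have hj : j ≤ mq * j + mq := by nlinarith [Nat.le_mul_of_pos_left j hmq1]
    have : q = f^[mq * j + mq - j] (f^[j] q) := by
      rw [← Function.iterate_add_apply, Nat.sub_add_cancel hj]
      rw [show mq * j + mq = mq * (j + 1) by ring]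
      exact (periodic_iterate hmqq (j + 1)).symm
    have h' : f^[i] p = f^[j] q := h
    rw [this, ← h']
    exact horbmem p i _
  -- minimal distance between the two orbits
  obtain ⟨⟨a0, b0⟩, hab, hmin⟩ :=
    (hOpfin.isCompact.prod hOqfin.isCompact).exists_isMinOn
      (⟨(p, q), ⟨0, rfl⟩, ⟨0, rfl⟩⟩ : (Op ×ˢ Oq).Nonempty) continuous_dist.continuousOn
  set δ₀ := dist a0 b0 with hδ₀
  have hδ₀pos : 0 < δ₀ := dist_pos.2 (hdisj _ hab.1 _ hab.2)
  have hminle : ∀ a ∈ Op, ∀ b ∈ Oq, δ₀ ≤ dist a b := fun a ha b hb =>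
    isMinOn_iff.1 hmin (a, b) ⟨ha, hb⟩
  refine ⟨δ₀ / 8, by linarith, fun x ε hε => ?_⟩
  set δ := δ₀ / 8 with hδdef
  have hδpos : 0 < δ := by positivity
  -- one of the two orbits is 4δ-far from x
  have hvex : ∃ v, (∀ i : ℕ, f^[i] v ∈ Op ∪ Oq) ∧ ∀ i : ℕ, 4 * δ ≤ dist x (f^[i] v) := by
    by_cases hcp : ∀ i : ℕ, 4 * δ ≤ dist x (f^[i] p)
    · exact ⟨p, fun i => Or.inl ⟨i, rfl⟩, hcp⟩
    · push_neg at hcp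
      obtain ⟨i, hi⟩ := hcp
      refine ⟨q, fun j => Or.inr ⟨j, rfl⟩, fun j => ?_⟩
      by_contra hj
      push_neg at hj
      have h1 : δ₀ ≤ dist (f^[i] p) (f^[j] q) := hminle _ ⟨i, rfl⟩ _ ⟨j, rfl⟩
      have h2 : dist (f^[i] p) (f^[j] q) ≤ dist (f^[i] p) x + dist x (f^[j] q) :=
        dist_triangle _ _ _
      rw [dist_comm (f^[i] p) x] at h2
      have : δ₀ = 8 * δ := by rw [hδdef]; ring
      linarith
  obtain ⟨v, -, hv⟩ := hvex
  set ε₀ := min ε δ with hε₀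
  have hε₀pos : 0 < ε₀ := lt_min hε hδpos
  -- a periodic point r near x
  obtain ⟨r, hrball, mr, hmr1, hmrr⟩ :=
    hp.inter_open_nonempty (ball x ε₀) isOpen_ball ⟨x, mem_ball_self hε₀pos⟩
  -- the set of points shadowing the orbit of v for mr steps
  set V : Set X := ⋂ i ∈ Finset.range (mr + 1), f^[i] ⁻¹' ball (f^[i] v) δ with hV
  have hVopen : IsOpen V :=
    isOpen_biInter_finset fun i _ => isOpen_ball.preimage (hf.iterate i)
  have hVne : V.Nonempty := ⟨v, mem_iInter₂.2 fun i _ => mem_ball_self hδpos⟩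
  obtain ⟨k, w, ⟨y, hyball, hyk⟩, hwV⟩ := ht (ball x ε₀) V isOpen_ball hVopen
    ⟨x, mem_ball_self hε₀pos⟩ hVne
  -- n = smallest multiple of mr beyond k
  have hdm := Nat.div_add_mod k mr
  have hmlt : k % mr < mr := Nat.mod_lt _ hmr1
  set n := mr * (k / mr + 1) with hn
  have hkn : k ≤ n := by rw [hn]; nlinarith [Nat.div_add_mod k mr, Nat.mod_lt k hmr1]
  set i := n - k with hi
  have hile : i ≤ mr := by
    have : n = mr * (k / mr) + mr := by rw [hn]; ring
    omega
  have hnik : n = i + k := by omega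
  have hrn : f^[n] r = r := periodic_iterate hmrr (k / mr + 1)
  have hyn : f^[n] y ∈ ball (f^[i] v) δ := by
    have h1 : f^[k] y ∈ V := by rw [← hyk] at hwV; exact hwV
    have h2 : f^[k] y ∈ f^[i] ⁻¹' ball (f^[i] v) δ :=
      mem_iInter₂.1 h1 i (Finset.mem_range.2 (by omega))
    rw [hnik, Function.iterate_add_apply]
    exact h2
  -- the distance estimates
  have hxr : dist x r < δ := by
    have := mem_ball.1 hrball
    rw [dist_comm] at this
    exact lt_of_lt_of_le this (min_le_right _ _)
  have hxy : dist x y < ε := by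
    have := mem_ball.1 hyball
    rw [dist_comm] at this
    exact lt_of_lt_of_le this (min_le_left _ _)
  have hxrε : dist x r < ε := by
    have := mem_ball.1 hrball
    rw [dist_comm] at this
    exact lt_of_lt_of_le this (min_le_left _ _)
  have h4 : 4 * δ ≤ dist x (f^[i] v) := hv i
  have htri : dist x (f^[i] v) ≤ dist x r + dist r (f^[n] y) + dist (f^[n] y) (f^[i] v) :=
    dist_triangle4 _ _ _ _
  have hyball' : dist (f^[n] y) (f^[i] v) < δ := mem_ball.1 hyn
  have hbig : 2 * δ < dist r (f^[n] y) := by linarith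
  by_cases hc : δ < dist (f^[n] x) (f^[n] y)
  · exact ⟨y, hxy, n, hc⟩
  · push_neg at hc
    refine ⟨r, hxrε, n, ?_⟩
    have h5 : dist r (f^[n] y) ≤ dist r (f^[n] x) + dist (f^[n] x) (f^[n] y) :=
      dist_triangle _ _ _
    have h6 : dist r (f^[n] x) = dist (f^[n] x) (f^[n] r) := by rw [hrn, dist_comm]
    linarith

/-- A Devaney-chaotic map is weakly indecomposable. -/
private lemma wi_of_chaotic [SecondCountableTopology X] [BaireSpace X] [Nonempty X]
    (hf : Continuous f) (ht : TopTransitive f) (hs : Sensitive f) :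
    WeaklyIndecomposable f := by
  classical
  obtain ⟨δ, hδ, hsen⟩ := hs
  -- sensitivity rules out isolated points
  have hacc : ∀ x : X, (𝓝[≠] x).NeBot := by
    intro x
    rw [← mem_closure_iff_nhdsWithin_neBot]
    refine Metric.mem_closure_iff.2 fun ε hε => ?_
    obtain ⟨y, hy, n, hn⟩ := hsen x ε hε
    refine ⟨y, ?_, hy⟩
    intro hyx
    rw [mem_singleton_iff] at hyx
    rw [hyx] at hn
    simp at hn
    linarith
  have hinf : ∀ W : Set X, IsOpen W → W.Nonempty → W.Infinite := by
    intro W hW ⟨w, hw⟩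
    haveI := hacc w
    exact infinite_of_mem_nhds w (hW.mem_nhds hw)
  set B := countableBasis X with hB
  set S : Set X := ⋂ V ∈ B, ⋃ k : ℕ, f^[k] ⁻¹' V with hS
  have hopen : ∀ V ∈ B, IsOpen (⋃ k : ℕ, f^[k] ⁻¹' V) := fun V hV =>
    isOpen_iUnion fun k => (isOpen_of_mem_countableBasis hV).preimage (hf.iterate k)
  have hdense : ∀ V ∈ B, Dense (⋃ k : ℕ, f^[k] ⁻¹' V) := by
    intro V hV
    rw [dense_iff_inter_open]
    intro O hO hOne
    obtain ⟨n, w, ⟨u, huO, huw⟩, hwV⟩ := ht O V hO (isOpen_of_mem_countableBasis hV)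
      hOne (nonempty_of_mem_countableBasis hV)
    exact ⟨u, huO, mem_iUnion.2 ⟨n, by rw [mem_preimage, huw]; exact hwV⟩⟩
  have hSgd : IsGδ S := IsGδ.biInter (countable_countableBasis X)
    fun V hV => (hopen V hV).isGδ
  have hSd : Dense S := by
    refine dense_of_mem_residual ?_
    refine (countable_bInter_mem (countable_countableBasis X)).2 fun V hV => ?_
    exact mem_residual.2 ⟨_, subset_rfl, (hopen V hV).isGδ, hdense V hV⟩
  -- each point of S has full ω-limit set
  have htail : ∀ x ∈ S, ∀ n : ℕ, Dense {y | ∃ k, n ≤ k ∧ f^[k] x = y} := by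
    intro x hxS n
    rw [dense_iff_inter_open]
    intro W hW hWne
    have hW' : (W \ ((fun j => f^[j] x) '' (Iio n))).Nonempty :=
      ((hinf W hW hWne).diff ((Set.finite_Iio n).image _)).nonempty
    obtain ⟨w, hwW'⟩ := hW'
    have hopenW' : IsOpen (W \ ((fun j => f^[j] x) '' (Iio n))) :=
      hW.sdiff (((Set.finite_Iio n).image _).isClosed)
    obtain ⟨V, hVB, hwV, hVsub⟩ :=
      (isBasis_countableBasis X).exists_subset_of_mem_open hwW' hopenW'
    obtain ⟨k, hk⟩ := mem_iUnion.1 (mem_iInter₂.1 hxS V hVB)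
    have hkV : f^[k] x ∈ V := hk
    have hkn : n ≤ k := by
      by_contra hlt
      exact (hVsub hkV).2 ⟨k, Set.mem_Iio.2 (Nat.lt_of_not_le hlt), rfl⟩
    exact ⟨f^[k] x, (hVsub hkV).1, ⟨k, hkn, rfl⟩⟩
  have homega : ∀ x ∈ S, omegaSet f x = univ := by
    intro x hx
    rw [omegaSet]
    have : ∀ n : ℕ, closure {y | ∃ k, n ≤ k ∧ f^[k] x = y} = univ := fun n =>
      (htail x hx n).closure_eq
    simp [this]
  refine ⟨S, ⟨S, subset_rfl, hSgd, hSd⟩, fun x hx y hy => ?_, fun x hx => ?_⟩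
  · rw [homega x hx, homega y hy]
  · rw [homega x hx]
    exact univ_nonempty

end Aux

theorem devaneyChaotic_iff_weaklyIndecomposable_and_densePeriodic
    {X : Type*} [MetricSpace X] [TopologicalSpace.SeparableSpace X] [BaireSpace X]
    [Infinite X] (f : X → X) (hf : Continuous f) :
    DevaneyChaotic f ↔ (WeaklyIndecomposable f ∧ DensePeriodicPts f) := by
  haveI : SecondCountableTopology X := UniformSpace.secondCountable_of_separable X
  haveI : Nonempty X := inferInstance
  constructor
  · rintro ⟨ht, hp, hs⟩
    exact ⟨wi_of_chaotic hf ht hs, hp⟩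
  · rintro ⟨hwi, hp⟩
    have ht := transitive_of_wi hf hwi hp
    exact ⟨ht, hp, sensitive_of_trans hf ht hp⟩
end

section
/- Let X be a compact metric space and f : X → X a continuous map. If f is indecomposable, then f is weakly indecomposable; that is, there exists a residual subset S ⊆ X such that ω(x) = ω(y) ≠ ∅ for all x, y ∈ S. -/
open Set Topology Filter TopologicalSpace

section Aux

variable {X : Type*} [MetricSpace X] [CompactSpace X]

private lemma omegaSet_nonempty' (g : X → X) (x : X) : (omegaSet g x).Nonempty := by
  apply IsCompact.nonempty_iInter_of_sequence_nonempty_isCompact_isClosed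
    (t := fun n => closure {y | ∃ k, n ≤ k ∧ g^[k] x = y})
  · intro n
    apply closure_mono
    rintro y ⟨k, hk, he⟩
    exact ⟨k, by omega, he⟩
  · intro n
    exact ⟨g^[n] x, subset_closure ⟨n, le_refl n, rfl⟩⟩
  · exact isClosed_closure.isCompact
  · intro n
    exact isClosed_closure

omit [CompactSpace X] in
private lemma isClosed_omegaSet (g : X → X) (x : X) : IsClosed (omegaSet g x) :=
  isClosed_iInter fun _ => isClosed_closure

omit [CompactSpace X] in
/-- If the orbit tail eventually avoids `U` (open), then `ω(x) ∩ U = ∅`. -/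
private lemma omega_disjoint_of_tail_avoid {g : X → X} {x : X} {U : Set X} (hU : IsOpen U)
    {m : ℕ} (h : ∀ k, m ≤ k → g^[k] x ∉ U) : omegaSet g x ∩ U = ∅ := by
  have h1 : omegaSet g x ⊆ closure {y | ∃ k, m ≤ k ∧ g^[k] x = y} := iInter_subset _ m
  have h2 : closure {y | ∃ k, m ≤ k ∧ g^[k] x = y} ⊆ Uᶜ := by
    apply closure_minimal _ hU.isClosed_compl
    rintro y ⟨k, hk, rfl⟩
    exact h k hk
  rw [Set.eq_empty_iff_forall_notMem]
  rintro y ⟨hy, hyU⟩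
  exact h2 (h1 hy) hyU

/-- If the orbit visits `U` at arbitrarily late times, then `ω(x)` meets `closure U`. -/
private lemma omega_meets_closure {g : X → X} {x : X} {U : Set X}
    (h : ∀ n, ∃ k, n ≤ k ∧ g^[k] x ∈ U) : (omegaSet g x ∩ closure U).Nonempty := by
  set t : ℕ → Set X := fun n => closure ({y | ∃ k, n ≤ k ∧ g^[k] x = y} ∩ U) with ht
  have hne : (⋂ n, t n).Nonempty := by
    apply IsCompact.nonempty_iInter_of_sequence_nonempty_isCompact_isClosed
    · intro n
      apply closure_mono
      rintro y ⟨⟨k, hk, he⟩, hyU⟩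
      exact ⟨⟨k, by omega, he⟩, hyU⟩
    · intro n
      obtain ⟨k, hk, hkU⟩ := h n
      exact ⟨g^[k] x, subset_closure ⟨⟨k, hk, rfl⟩, hkU⟩⟩
    · exact isClosed_closure.isCompact
    · intro n; exact isClosed_closure
  obtain ⟨y, hy⟩ := hne
  refine ⟨y, ?_, ?_⟩
  · apply Set.mem_iInter.mpr
    intro n
    exact closure_mono (Set.inter_subset_left) (Set.mem_iInter.mp hy n)
  · exact closure_mono (Set.inter_subset_right) (Set.mem_iInter.mp hy 0)

/-- The key dichotomy coming from indecomposability. -/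
private lemma dichotomy (f : X → X) (hf : Continuous f) (hind : Indecomposable f)
    (U : Set X) (hU : IsOpen U) :
    ∃ T ∈ residual X,
      (∀ x ∈ T, omegaSet f x ∩ U = ∅) ∨
      (∀ x ∈ T, (omegaSet f x ∩ closure U).Nonempty) := by
  set W : ℕ → Set X := fun n => {x | ∃ k, n ≤ k ∧ f^[k] x ∈ U} with hW
  have hWopen : ∀ n, IsOpen (W n) := by
    intro n
    have : W n = ⋃ k ∈ Set.Ici n, (f^[k]) ⁻¹' U := by
      ext z; simp [hW]
    rw [this]
    exact isOpen_biUnion fun k _ => hU.preimage (hf.iterate k)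
  by_cases hP : ∀ n, Dense (W n)
  · -- Case A : the set of points visiting U infinitely often is residual
    refine ⟨⋂ n, W n, ?_, Or.inr ?_⟩
    · exact (countable_iInter_mem).mpr fun n => residual_of_dense_open (hWopen n) (hP n)
    · intro x hx
      exact omega_meets_closure fun n => Set.mem_iInter.mp hx n
  · -- Case B : some tail-avoiding closed invariant set has nonempty interior
    push_neg at hP
    obtain ⟨n0, hn0⟩ := hP
    set C : ℕ → Set X := fun m => {x | ∀ k, m ≤ k → f^[k] x ∉ U} with hC
    have hCclosed : ∀ m, IsClosed (C m) := by
      intro m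
      have : C m = ⋂ k ∈ Set.Ici m, (f^[k]) ⁻¹' Uᶜ := by
        ext z; simp [hC]
      rw [this]
      exact isClosed_biInter fun k _ => (hU.isClosed_compl).preimage (hf.iterate k)
    have hCinv : ∀ m, f '' C m ⊆ C m := by
      intro m
      rintro _ ⟨z, hz, rfl⟩ k hk
      have := hz (k + 1) (by omega)
      rwa [Function.iterate_succ_apply] at this
    have hCint : (interior (C n0)).Nonempty := by
      rw [Dense] at hn0
      push_neg at hn0
      obtain ⟨z, hz⟩ := hn0
      refine ⟨z, ?_⟩
      have hsub : (closure (W n0))ᶜ ⊆ C n0 := by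
        intro w hw k hk hkU
        exact hw (subset_closure ⟨k, hk, hkU⟩)
      exact interior_maximal hsub (isClosed_closure.isOpen_compl) hz
    -- the union of interiors of the C m is dense, via indecomposability
    have hdense : Dense (⋃ m, interior (C m)) := by
      rw [dense_iff_inter_open]
      intro V hV hVne
      set B : Set X := closure (⋃ k, f^[k] '' V) with hB
      have hBclosed : IsClosed B := isClosed_closure
      have hBinv : f '' B ⊆ B := by
        refine (image_closure_subset_closure_image hf).trans (closure_mono ?_)
        rintro _ ⟨z, hz, rfl⟩
        obtain ⟨s, ⟨k, rfl⟩, hzs⟩ := hz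
        obtain ⟨v, hv, rfl⟩ := hzs
        exact Set.mem_iUnion.mpr ⟨k + 1, ⟨v, hv, by rw [Function.iterate_succ_apply']⟩⟩
      have hVB : V ⊆ B := by
        intro v hv
        exact subset_closure (Set.mem_iUnion.mpr ⟨0, ⟨v, hv, rfl⟩⟩)
      have hBint : (interior B).Nonempty :=
        hVne.mono (interior_maximal hVB hV)
      obtain ⟨p, hp⟩ := hind (C n0) B (hCclosed n0) hBclosed (hCinv n0) hBinv hCint hBint
      -- p lies in an open set contained in closure of the orbit of V, so the orbit meets it
      have hpB : p ∈ closure (⋃ k, f^[k] '' V) := (interior_subset hp).2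
      rw [mem_closure_iff] at hpB
      obtain ⟨q, hq1, hq2⟩ := hpB (interior (C n0 ∩ B)) isOpen_interior hp
      obtain ⟨s, ⟨k, rfl⟩, hqs⟩ := hq2
      obtain ⟨v, hv, rfl⟩ := hqs
      -- v ∈ V ∩ f^[k]⁻¹(interior (C n0 ∩ B)) ⊆ interior (C (n0 + k))
      have hopen : IsOpen (V ∩ (f^[k]) ⁻¹' (interior (C n0 ∩ B))) :=
        hV.inter (isOpen_interior.preimage (hf.iterate k))
      have hsub : V ∩ (f^[k]) ⁻¹' (interior (C n0 ∩ B)) ⊆ C (n0 + k) := by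
        rintro z ⟨_, hz2⟩ m hm
        have hz3 : f^[k] z ∈ C n0 := (interior_subset hz2).1
        have h4 := hz3 (m - k) (by omega)
        rwa [← Function.iterate_add_apply, Nat.sub_add_cancel (by omega)] at h4
      refine ⟨v, hv, Set.mem_iUnion.mpr ⟨n0 + k, ?_⟩⟩
      exact interior_maximal hsub hopen ⟨hv, hq1⟩
    refine ⟨⋃ m, interior (C m), residual_of_dense_open (isOpen_iUnion fun m => isOpen_interior) hdense, Or.inl ?_⟩
    intro x hx
    obtain ⟨s, ⟨m, rfl⟩, hxs⟩ := hx
    exact omega_disjoint_of_tail_avoid hU (interior_subset hxs)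

end Aux

theorem indecomposable_implies_weaklyIndecomposable_of_compact
    {X : Type*} [MetricSpace X] [CompactSpace X] (f : X → X) (hf : Continuous f)
    (hind : Indecomposable f) : WeaklyIndecomposable f := by
  classical
  -- choose, for each basic open set U, a residual set realizing the dichotomy
  have key : ∀ U : countableBasis X, ∃ T ∈ residual X,
      (∀ x ∈ T, omegaSet f x ∩ (U : Set X) = ∅) ∨
      (∀ x ∈ T, (omegaSet f x ∩ closure (U : Set X)).Nonempty) := by
    intro U
    exact dichotomy f hf hind U ((isBasis_countableBasis X).isOpen U.2)
  choose T hTres hT using key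
  haveI : Countable (countableBasis X) := (countable_countableBasis X).to_subtype
  have hSres : (⋂ U : countableBasis X, T U) ∈ residual X :=
    (countable_iInter_mem).mpr hTres
  obtain ⟨G, hG1, hG2, hG3⟩ := mem_residual.mp hSres
  refine ⟨⋂ U : countableBasis X, T U, ⟨G, hG1, hG2, hG3⟩, ?_, ?_⟩
  · -- all points of S have the same ω-limit set
    have main : ∀ x ∈ ⋂ U : countableBasis X, T U, ∀ y ∈ ⋂ U : countableBasis X, T U,
        omegaSet f x ⊆ omegaSet f y := by
      intro x hx y hy z hz
      by_contra hzy
      -- separate z from the closed set ω(y) by a basic open set with closure disjoint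
      have hclosed : IsClosed (omegaSet f y) := isClosed_omegaSet f y
      have hzopen : z ∈ (omegaSet f y)ᶜ := hzy
      obtain ⟨ε, hε, hball⟩ := Metric.isOpen_iff.mp hclosed.isOpen_compl z hzopen
      obtain ⟨U, hUb, hzU, hUsub⟩ := (isBasis_countableBasis X).exists_subset_of_mem_open
        (Metric.mem_ball_self (half_pos hε)) (Metric.isOpen_ball (x := z) (ε := ε / 2))
      have hclU : closure U ⊆ (omegaSet f y)ᶜ := by
        refine subset_trans (closure_mono hUsub) ?_
        refine subset_trans Metric.closure_ball_subset_closedBall ?_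
        refine subset_trans ?_ hball
        intro w hw
        rw [Metric.mem_closedBall] at hw
        rw [Metric.mem_ball]
        linarith
      have hxU := Set.mem_iInter.mp hx ⟨U, hUb⟩
      have hyU := Set.mem_iInter.mp hy ⟨U, hUb⟩
      rcases hT ⟨U, hUb⟩ with h | h
      · have := h x hxU
        rw [Set.eq_empty_iff_forall_notMem] at this
        exact this z ⟨hz, hzU⟩
      · obtain ⟨w, hw1, hw2⟩ := h y hyU
        exact hclU hw2 hw1
    intro x hx y hy
    exact Set.Subset.antisymm (main x hx y hy) (main y hy x hx)
  · intro x _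
    exact omegaSet_nonempty' f x
end

section
/- Let I ⊆ ℝ be an interval and f : I → I a continuous map. Suppose J ⊆ I is a subinterval containing no periodic point of f, and suppose z ∈ I and positive integers m < n satisfy z ∈ J, f^m(z) ∈ J, and f^n(z) ∈ J. Then either z < f^m(z) < f^n(z) or z > f^m(z) > f^n(z). -/
theorem interval_no_periodic_orbit_monotone
    (I : Set ℝ) (hI : I.OrdConnected) (f : ℝ → ℝ)
    (hf : ContinuousOn f I) (hmaps : Set.MapsTo f I I)
    (J : Set ℝ) (hJI : J ⊆ I) (hJ : J.OrdConnected)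
    (hnoper : ∀ x ∈ J, ∀ k : ℕ, 1 ≤ k → f^[k] x ≠ x)
    (z : ℝ) (m n : ℕ) (hm : 0 < m) (hmn : m < n)
    (hz : z ∈ J) (hzm : f^[m] z ∈ J) (hzn : f^[n] z ∈ J) :
    (z < f^[m] z ∧ f^[m] z < f^[n] z) ∨ (f^[n] z < f^[m] z ∧ f^[m] z < z) := by
  -- iterates are continuous on I
  have hiter : ∀ k : ℕ, ContinuousOn (f^[k]) I := by
    intro k
    induction k with
    | zero => simpa using continuousOn_id
    | succ k ih =>
      rw [Function.iterate_succ']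
      exact hf.comp ih (hmaps.iterate k)
  have hJpre : IsPreconnected J := hJ.isPreconnected
  -- sign dichotomy: for each k ≥ 1, f^[k] - id has constant sign on J
  have dich : ∀ k : ℕ, 1 ≤ k →
      (∀ t ∈ J, t < f^[k] t) ∨ (∀ t ∈ J, f^[k] t < t) := by
    intro k hk
    have hcont : ContinuousOn (fun t => f^[k] t - t) J :=
      ((hiter k).mono hJI).sub continuousOn_id
    have key : ∀ u ∈ J, ∀ v ∈ J, 0 < f^[k] u - u → 0 < f^[k] v - v := by
      intro u hu v hv hupos
      by_contra hneg
      push_neg at hneg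
      have hvne : f^[k] v - v ≠ 0 := sub_ne_zero.mpr (hnoper v hv k hk)
      have hvlt : f^[k] v - v < 0 := lt_of_le_of_ne hneg hvne
      have h0 : (0:ℝ) ∈ Set.Icc (f^[k] v - v) (f^[k] u - u) := ⟨hvlt.le, hupos.le⟩
      obtain ⟨w, hw, hw0⟩ := hJpre.intermediate_value hv hu hcont h0
      simp only [] at hw0
      exact hnoper w hw k hk (sub_eq_zero.mp hw0)
    rcases lt_trichotomy z (f^[k] z) with h | h | h
    · left; intro t ht
      have := key z hz t ht (by linarith)
      linarith
    · exact absurd h.symm (hnoper z hz k hk)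
    · right; intro t ht
      by_contra hle
      push_neg at hle
      have hne : f^[k] t ≠ t := hnoper t ht k hk
      have ht' : t < f^[k] t := lt_of_le_of_ne hle (Ne.symm hne)
      have := key t ht z hz (by linarith)
      linarith
  set p := n - m with hpdef
  have hp : 1 ≤ p := Nat.sub_pos_of_lt hmn
  have hpm : p + m = n := Nat.sub_add_cancel hmn.le
  have hCB : f^[n] z = f^[p] (f^[m] z) := by
    rw [← Function.iterate_add_apply, hpm]
  rcases dich m hm with hPos | hNeg
  · -- z < f^[m] z ; show f^[m] z < f^[n] z
    left
    refine ⟨hPos z hz, ?_⟩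
    by_contra hle
    push_neg at hle
    have hne : f^[n] z ≠ f^[m] z := by
      rw [hCB]
      exact hnoper _ hzm p hp
    have hCltB : f^[n] z < f^[m] z := lt_of_le_of_ne hle hne
    -- the lag-p sign is negative
    have hNegp : ∀ t ∈ J, f^[p] t < t := by
      rcases dich p hp with h | h
      · exfalso
        have := h (f^[m] z) hzm
        rw [← hCB] at this
        linarith
      · exact h
    -- sign at multiples of m is positive
    have posmul : ∀ j : ℕ, ∀ t ∈ J, t < f^[(j+1)*m] t := by
      intro j
      induction j with
      | zero => simpa using hPos
      | succ j ih =>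
        have e : (j+1+1)*m = (j+1)*m + m := by ring
        have h1 : z < f^[(j+1+1)*m] z := by
          rw [e, Function.iterate_add_apply]
          exact lt_trans (hPos z hz) (ih (f^[m] z) hzm)
        rcases dich ((j+1+1)*m) (Nat.mul_pos (Nat.succ_pos _) hm) with h | h
        · exact h
        · exact absurd (h z hz) (by linarith)
    -- sign at multiples of p is negative
    have negmul : ∀ j : ℕ, ∀ t ∈ J, f^[(j+1)*p] t < t := by
      intro j
      induction j with
      | zero => simpa using hNegp
      | succ j ih =>
        have e : (j+1+1)*p = (j+1)*p + p := by ring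
        have h1 : f^[(j+1+1)*p] (f^[m] z) < f^[m] z := by
          rw [e, Function.iterate_add_apply, ← hCB]
          exact lt_trans (ih (f^[n] z) hzn) hCltB
        rcases dich ((j+1+1)*p) (Nat.mul_pos (Nat.succ_pos _) hp) with h | h
        · exact absurd (h (f^[m] z) hzm) (by linarith)
        · exact h
    have h1 := posmul (p-1) z hz
    have h2 := negmul (m-1) z hz
    rw [Nat.sub_add_cancel hp] at h1
    rw [Nat.sub_add_cancel hm] at h2
    rw [Nat.mul_comm] at h1
    linarith
  · -- f^[m] z < z ; show f^[n] z < f^[m] z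
    right
    refine ⟨?_, hNeg z hz⟩
    by_contra hle
    push_neg at hle
    have hne : f^[n] z ≠ f^[m] z := by
      rw [hCB]
      exact hnoper _ hzm p hp
    have hBltC : f^[m] z < f^[n] z := lt_of_le_of_ne hle (Ne.symm hne)
    have hPosp : ∀ t ∈ J, t < f^[p] t := by
      rcases dich p hp with h | h
      · exact h
      · exfalso
        have := h (f^[m] z) hzm
        rw [← hCB] at this
        linarith
    have negmul : ∀ j : ℕ, ∀ t ∈ J, f^[(j+1)*m] t < t := by
      intro j
      induction j with
      | zero => simpa using hNeg
      | succ j ih =>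
        have e : (j+1+1)*m = (j+1)*m + m := by ring
        have h1 : f^[(j+1+1)*m] z < z := by
          rw [e, Function.iterate_add_apply]
          exact lt_trans (ih (f^[m] z) hzm) (hNeg z hz)
        rcases dich ((j+1+1)*m) (Nat.mul_pos (Nat.succ_pos _) hm) with h | h
        · exact absurd (h z hz) (by linarith)
        · exact h
    have posmul : ∀ j : ℕ, ∀ t ∈ J, t < f^[(j+1)*p] t := by
      intro j
      induction j with
      | zero => simpa using hPosp
      | succ j ih =>
        have e : (j+1+1)*p = (j+1)*p + p := by ring
        have h1 : f^[m] z < f^[(j+1+1)*p] (f^[m] z) := by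
          rw [e, Function.iterate_add_apply, ← hCB]
          exact lt_trans hBltC (ih (f^[n] z) hzn)
        rcases dich ((j+1+1)*p) (Nat.mul_pos (Nat.succ_pos _) hp) with h | h
        · exact h
        · exact absurd (h (f^[m] z) hzm) (by linarith)
    have h1 := negmul (p-1) z hz
    have h2 := posmul (m-1) z hz
    rw [Nat.sub_add_cancel hp] at h1
    rw [Nat.sub_add_cancel hm] at h2
    rw [Nat.mul_comm] at h1
    linarith
end

section
/- Let f : [0,1] → [0,1] be the continuous piecewise-linear map defined by f(x) = -2x + 1 for x ∈ [0, 1/6], f(x) = 2x + 1/3 for x ∈ [1/6, 1/3], f(x) = -3x + 2 for x ∈ [1/3, 2/3], and f(x) = x - 2/3 for x ∈ [2/3, 1]. Then f is strongly indecomposable: for every sequence (A_n)_{n≥1} of f-invariant closed subsets of [0,1] each having nonempty interior, ⋂_{n≥1} A_n has nonempty interior. -/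
section Aux

variable {f : Set.Icc (0:ℝ) 1 → Set.Icc (0:ℝ) 1}

/-- `f^[n]` maps the interval `[a,b]` onto a superset of `[c,d]`. -/
def Cov (f : Set.Icc (0:ℝ) 1 → Set.Icc (0:ℝ) 1) (n : ℕ) (a b c d : ℝ) : Prop :=
  ∀ y : ℝ, c ≤ y → y ≤ d → ∃ x : Set.Icc (0:ℝ) 1,
    a ≤ (x:ℝ) ∧ (x:ℝ) ≤ b ∧ ((f^[n] x : Set.Icc (0:ℝ) 1) : ℝ) = y

lemma cov_mono {n : ℕ} {a b c d a' b' c' d' : ℝ} (h : Cov f n a b c d)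
    (ha : a' ≤ a) (hb : b ≤ b') (hc : c ≤ c') (hd : d' ≤ d) : Cov f n a' b' c' d' := by
  intro y hy1 hy2
  obtain ⟨x, hx1, hx2, hx3⟩ := h y (le_trans hc hy1) (le_trans hy2 hd)
  exact ⟨x, le_trans ha hx1, le_trans hx2 hb, hx3⟩

lemma cov_comp {m k : ℕ} {a b c d e g : ℝ} (H1 : Cov f m a b c d)
    (H2 : Cov f k c d e g) : Cov f (k + m) a b e g := by
  intro y hy1 hy2
  obtain ⟨x', hx'1, hx'2, hx'3⟩ := H2 y hy1 hy2
  obtain ⟨x, hh1, hh2, hh3⟩ := H1 (x' : ℝ) hx'1 hx'2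
  refine ⟨x, hh1, hh2, ?_⟩
  rw [Function.iterate_add_apply, show f^[m] x = x' from Subtype.coe_injective hh3]
  exact hx'3

lemma cov1 (h1 : ∀ x : Set.Icc (0:ℝ) 1, (x:ℝ) ≤ 1/6 → (f x : ℝ) = -2*(x:ℝ) + 1)
    {a b : ℝ} (ha : 0 ≤ a) (hb : b ≤ 1/6) : Cov f 1 a b (1 - 2*b) (1 - 2*a) := by
  intro y hy1 hy2
  refine ⟨⟨(1-y)/2, Set.mem_Icc.mpr ⟨by linarith, by linarith⟩⟩, by linarith, by linarith, ?_⟩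
  simp only [Function.iterate_one]
  rw [h1 ⟨(1-y)/2, _⟩ (by show ((1:ℝ)-y)/2 ≤ 1/6; linarith)]
  show -2 * ((1-y)/2) + 1 = y
  ring

lemma cov2 (h2 : ∀ x : Set.Icc (0:ℝ) 1, 1/6 ≤ (x:ℝ) → (x:ℝ) ≤ 1/3 → (f x : ℝ) = 2*(x:ℝ) + 1/3)
    {a b : ℝ} (ha : 1/6 ≤ a) (hb : b ≤ 1/3) :
    Cov f 1 a b (2*a + 1/3) (2*b + 1/3) := by
  intro y hy1 hy2
  refine ⟨⟨(y - 1/3)/2, Set.mem_Icc.mpr ⟨by linarith, by linarith⟩⟩, by linarith, by linarith, ?_⟩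
  simp only [Function.iterate_one]
  rw [h2 ⟨(y - 1/3)/2, _⟩ (by show (1:ℝ)/6 ≤ (y - 1/3)/2; linarith)
    (by show ((y:ℝ) - 1/3)/2 ≤ 1/3; linarith)]
  show 2 * ((y - 1/3)/2) + 1/3 = y
  ring

lemma cov3 (h3 : ∀ x : Set.Icc (0:ℝ) 1, 1/3 ≤ (x:ℝ) → (x:ℝ) ≤ 2/3 → (f x : ℝ) = -3*(x:ℝ) + 2)
    {a b : ℝ} (ha : 1/3 ≤ a) (hb : b ≤ 2/3) :
    Cov f 1 a b (2 - 3*b) (2 - 3*a) := by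
  intro y hy1 hy2
  refine ⟨⟨(2 - y)/3, Set.mem_Icc.mpr ⟨by linarith, by linarith⟩⟩, by linarith, by linarith, ?_⟩
  simp only [Function.iterate_one]
  rw [h3 ⟨(2 - y)/3, _⟩ (by show (1:ℝ)/3 ≤ (2 - y)/3; linarith)
    (by show ((2:ℝ) - y)/3 ≤ 2/3; linarith)]
  show -3 * ((2 - y)/3) + 2 = y
  ring

lemma cov4 (h4 : ∀ x : Set.Icc (0:ℝ) 1, 2/3 ≤ (x:ℝ) → (f x : ℝ) = (x:ℝ) - 2/3)
    {a b : ℝ} (ha : 2/3 ≤ a) (hb : b ≤ 1) :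
    Cov f 1 a b (a - 2/3) (b - 2/3) := by
  intro y hy1 hy2
  refine ⟨⟨y + 2/3, Set.mem_Icc.mpr ⟨by linarith, by linarith⟩⟩, by linarith, by linarith, ?_⟩
  simp only [Function.iterate_one]
  rw [h4 ⟨y + 2/3, _⟩ (by show (2:ℝ)/3 ≤ y + 2/3; linarith)]
  show y + 2/3 - 2/3 = y
  ring

/-- The interval `[a,b]` eventually covers `[2/3, 1]`. -/
def Good (f : Set.Icc (0:ℝ) 1 → Set.Icc (0:ℝ) 1) (a b : ℝ) : Prop :=
  ∃ n, Cov f n a b (2/3) 1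

lemma good_mono {a b a' b' : ℝ} (h : Good f a b) (ha : a' ≤ a) (hb : b ≤ b') :
    Good f a' b' := by
  obtain ⟨n, hn⟩ := h
  exact ⟨n, cov_mono hn ha hb le_rfl le_rfl⟩

lemma good_of_cov {m : ℕ} {a b c d : ℝ} (h : Cov f m a b c d) (hg : Good f c d) :
    Good f a b := by
  obtain ⟨n, hn⟩ := hg
  exact ⟨n + m, cov_comp h hn⟩

variable (hc1 : ∀ x : Set.Icc (0:ℝ) 1, (x:ℝ) ≤ 1/6 → (f x : ℝ) = -2*(x:ℝ) + 1)
variable (hc2 : ∀ x : Set.Icc (0:ℝ) 1, 1/6 ≤ (x:ℝ) → (x:ℝ) ≤ 1/3 → (f x : ℝ) = 2*(x:ℝ) + 1/3)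
variable (hc3 : ∀ x : Set.Icc (0:ℝ) 1, 1/3 ≤ (x:ℝ) → (x:ℝ) ≤ 2/3 → (f x : ℝ) = -3*(x:ℝ) + 2)
variable (hc4 : ∀ x : Set.Icc (0:ℝ) 1, 2/3 ≤ (x:ℝ) → (f x : ℝ) = (x:ℝ) - 2/3)

lemma g1 (hc1 : ∀ x : Set.Icc (0:ℝ) 1, (x:ℝ) ≤ 1/6 → (f x : ℝ) = -2*(x:ℝ) + 1) :
    Good f 0 (1/6) :=
  ⟨1, cov_mono (cov1 hc1 le_rfl le_rfl) le_rfl le_rfl (by norm_num) (by norm_num)⟩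

lemma g2 (hc2 : ∀ x : Set.Icc (0:ℝ) 1, 1/6 ≤ (x:ℝ) → (x:ℝ) ≤ 1/3 → (f x : ℝ) = 2*(x:ℝ) + 1/3) :
    Good f (1/6) (1/3) :=
  ⟨1, cov_mono (cov2 hc2 le_rfl le_rfl) le_rfl le_rfl (by norm_num) (by norm_num)⟩

lemma g3 (hc3 : ∀ x : Set.Icc (0:ℝ) 1, 1/3 ≤ (x:ℝ) → (x:ℝ) ≤ 2/3 → (f x : ℝ) = -3*(x:ℝ) + 2) :
    Good f (1/3) (2/3) :=
  ⟨1, cov_mono (cov3 hc3 le_rfl le_rfl) le_rfl le_rfl (by norm_num) (by norm_num)⟩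

lemma g4 (hc1 : ∀ x : Set.Icc (0:ℝ) 1, (x:ℝ) ≤ 1/6 → (f x : ℝ) = -2*(x:ℝ) + 1)
    (hc4 : ∀ x : Set.Icc (0:ℝ) 1, 2/3 ≤ (x:ℝ) → (f x : ℝ) = (x:ℝ) - 2/3) :
    Good f (2/3) 1 :=
  good_of_cov (cov_mono (cov4 hc4 le_rfl le_rfl) le_rfl le_rfl (by norm_num) (by norm_num))
    (g1 hc1)


/-- all four piecewise formulas -/
def Pieces (f : Set.Icc (0:ℝ) 1 → Set.Icc (0:ℝ) 1) : Prop :=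
  (∀ x : Set.Icc (0:ℝ) 1, (x:ℝ) ≤ 1/6 → (f x : ℝ) = -2*(x:ℝ) + 1) ∧
  (∀ x : Set.Icc (0:ℝ) 1, 1/6 ≤ (x:ℝ) → (x:ℝ) ≤ 1/3 → (f x : ℝ) = 2*(x:ℝ) + 1/3) ∧
  (∀ x : Set.Icc (0:ℝ) 1, 1/3 ≤ (x:ℝ) → (x:ℝ) ≤ 2/3 → (f x : ℝ) = -3*(x:ℝ) + 2) ∧
  (∀ x : Set.Icc (0:ℝ) 1, 2/3 ≤ (x:ℝ) → (f x : ℝ) = (x:ℝ) - 2/3)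

lemma base (H : Pieces f) {a b : ℝ} (ha : 0 ≤ a) (hb : b ≤ 1) (hab : a + 1/3 ≤ b) :
    Good f a b := by
  obtain ⟨hc1, hc2, hc3, hc4⟩ := H
  have hj1 : 6*a ≤ ((⌈6*a⌉₊ : ℕ):ℝ) := Nat.le_ceil _
  have hj2 : ((⌈6*a⌉₊ : ℕ):ℝ) < 6*a + 1 := Nat.ceil_lt_add_one (by linarith)
  have hj4 : ⌈6*a⌉₊ ≤ 4 := by
    have h5 : ((⌈6*a⌉₊ : ℕ):ℝ) < 5 := by linarith
    have h5' : ⌈6*a⌉₊ < 5 := by exact_mod_cast h5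
    omega
  set j := ⌈6*a⌉₊ with hj
  clear_value j
  interval_cases j <;> push_cast at hj1 hj2
  · exact good_mono (g1 hc1) (by linarith) (by linarith)
  · exact good_mono (g2 hc2) (by linarith) (by linarith)
  · exact ⟨1, cov_mono (cov3 hc3 (le_refl (1/3)) (by norm_num : (1:ℝ)/2 ≤ 2/3))
      (by linarith) (by linarith) (by norm_num) (by norm_num)⟩
  · exact good_of_cov (cov_mono (cov3 hc3 (by norm_num : (1:ℝ)/3 ≤ 1/2) le_rfl)
      (by linarith) (by linarith) (by norm_num) (by norm_num)) (g2 hc2)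
  · exact good_of_cov (cov_mono (cov4 hc4 le_rfl (by norm_num : (5:ℝ)/6 ≤ 1))
      (by linarith) (by linarith) (by norm_num) (by norm_num)) (g1 hc1)

/-- intervals inside [0,1/3]: either eventually cover [2/3,1], or some iterate covers an
interval at least twice as long. -/
lemma lemLow (H : Pieces f) {a b : ℝ} (ha : 0 ≤ a) (hb : b ≤ 1/3) (hab : a < b) :
    Good f a b ∨ ∃ m c d, Cov f m a b c d ∧ 0 ≤ c ∧ d ≤ 1 ∧ c + 2*(b - a) ≤ d := by
  obtain ⟨hc1, hc2, hc3, hc4⟩ := H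
  rcases le_or_gt b (1/6) with h6 | h6
  · exact Or.inr ⟨1, 1 - 2*b, 1 - 2*a, cov1 hc1 ha h6, by linarith, by linarith, by linarith⟩
  rcases le_or_gt (1/6) a with h6' | h6'
  · exact Or.inr ⟨1, 2*a + 1/3, 2*b + 1/3, cov2 hc2 h6' hb, by linarith, by linarith, by linarith⟩
  -- straddle at 1/6
  rcases le_or_gt (b - 1/6) (1/6 - a) with hh | hh
  · -- left half is bigger
    have c1 : Cov f 1 a b (2/3) (1 - 2*a) :=
      cov_mono (cov1 hc1 ha le_rfl) le_rfl h6.le (by norm_num) le_rfl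
    have c2 : Cov f 1 (2/3) (1 - 2*a) 0 (1/3 - 2*a) :=
      cov_mono (cov4 hc4 le_rfl (by linarith)) le_rfl le_rfl (by norm_num) (by linarith)
    have c12 : Cov f 2 a b 0 (1/3 - 2*a) := cov_comp c1 c2
    rcases le_or_gt (1/3 - 2*a) (1/6) with hs | hs
    · refine Or.inr ⟨3, 1 - 2*(1/3 - 2*a), 1, ?_, by linarith, le_rfl, by linarith⟩
      exact cov_comp c12 (cov_mono (cov1 hc1 le_rfl hs) le_rfl le_rfl le_rfl (by norm_num))
    · exact Or.inl (good_of_cov (cov_mono c12 le_rfl le_rfl le_rfl hs.le) (g1 hc1))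
  · -- right half is bigger
    have c1 : Cov f 1 a b (2/3) (2*b + 1/3) :=
      cov_mono (cov2 hc2 le_rfl hb) h6'.le le_rfl (by norm_num) le_rfl
    have c2 : Cov f 1 (2/3) (2*b + 1/3) 0 (2*b - 1/3) :=
      cov_mono (cov4 hc4 le_rfl (by linarith)) le_rfl le_rfl (by norm_num) (by linarith)
    have c12 : Cov f 2 a b 0 (2*b - 1/3) := cov_comp c1 c2
    rcases le_or_gt (2*b - 1/3) (1/6) with hs | hs
    · refine Or.inr ⟨3, 1 - 2*(2*b - 1/3), 1, ?_, by linarith, le_rfl, by linarith⟩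
      exact cov_comp c12 (cov_mono (cov1 hc1 le_rfl hs) le_rfl le_rfl le_rfl (by norm_num))
    · exact Or.inl (good_of_cov (cov_mono c12 le_rfl le_rfl le_rfl hs.le) (g1 hc1))

lemma indStep (H : Pieces f) : ∀ k : ℕ, ∀ a b : ℝ, 0 ≤ a → b ≤ 1 →
    a + (1/3) * (5/6)^k ≤ b → Good f a b := by
  obtain ⟨hc1, hc2, hc3, hc4⟩ := H
  intro k
  induction k with
  | zero => intro a b ha hb hL; exact base ⟨hc1, hc2, hc3, hc4⟩ ha hb (by norm_num at hL ⊢; linarith)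
  | succ k IH =>
    intro a b ha hb hL
    have hp : (0:ℝ) < (5/6)^k := by positivity
    have hs : ((5:ℝ)/6)^(k+1) = (5/6)^k * (5/6) := pow_succ _ _
    rw [hs] at hL
    rcases le_or_gt (a + (1/3) * (5/6)^k) b with hbig | hsmall
    · exact IH a b ha hb hbig
    have hab : a < b := by nlinarith
    have hlow : ∀ a' b' : ℝ, 0 ≤ a' → b' ≤ 1/3 → a' < b' → (∀ m c d, Cov f m a b c d →
        a' = c → b' = d → False) ∨ True := fun _ _ _ _ _ => Or.inr trivial
    -- main case analysis
    rcases le_or_gt b (1/3) with hb13 | hb13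
    · rcases lemLow ⟨hc1, hc2, hc3, hc4⟩ ha hb13 hab with hg | ⟨m, c, d, hcov, hc0, hd1, hlen⟩
      · exact hg
      · exact good_of_cov hcov (IH c d hc0 hd1 (by nlinarith))
    rcases le_or_gt a (1/6) with ha16 | ha16
    · exact good_mono (g2 hc2) ha16 hb13.le
    rcases le_or_gt (2/3) b with hb23 | hb23
    · rcases le_or_gt a (1/3) with ha13 | ha13
      · exact good_mono (g3 hc3) ha13 hb23
      rcases le_or_gt (2/3) a with ha23 | ha23
      · -- a ≥ 2/3 : shift down and use lemLow
        have c1 : Cov f 1 a b (a - 2/3) (b - 2/3) := cov4 hc4 ha23 hb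
        rcases lemLow ⟨hc1, hc2, hc3, hc4⟩ (by linarith) (by linarith)
            (by linarith : a - 2/3 < b - 2/3) with hg | ⟨m, c, d, hcov, hc0, hd1, hlen⟩
        · exact good_of_cov c1 hg
        · exact good_of_cov (cov_comp c1 hcov) (IH c d hc0 hd1 (by nlinarith))
      · -- straddle at 2/3
        rcases le_or_gt (b - 2/3) (3*(2/3 - a)) with hcase | hcase
        · -- left part
          have c1 : Cov f 1 a b 0 (2 - 3*a) :=
            cov_mono (cov3 hc3 ha13.le le_rfl) le_rfl hb23 (by norm_num) le_rfl
          rcases le_or_gt (2 - 3*a) (1/6) with hs | hs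
          · have c2 : Cov f 1 0 (2 - 3*a) (1 - 2*(2 - 3*a)) 1 :=
              cov_mono (cov1 hc1 le_rfl hs) le_rfl le_rfl le_rfl (by norm_num)
            exact good_of_cov (cov_comp c1 c2) (IH _ 1 (by linarith) le_rfl (by nlinarith))
          · exact good_of_cov (cov_mono c1 le_rfl le_rfl le_rfl hs.le) (g1 hc1)
        · -- right part
          have c1 : Cov f 1 a b 0 (b - 2/3) :=
            cov_mono (cov4 hc4 le_rfl hb) ha23.le le_rfl (by norm_num) le_rfl
          rcases le_or_gt (b - 2/3) (1/6) with hs | hs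
          · have c2 : Cov f 1 0 (b - 2/3) (1 - 2*(b - 2/3)) 1 :=
              cov_mono (cov1 hc1 le_rfl hs) le_rfl le_rfl le_rfl (by norm_num)
            exact good_of_cov (cov_comp c1 c2) (IH _ 1 (by linarith) le_rfl (by nlinarith))
          · exact good_of_cov (cov_mono c1 le_rfl le_rfl le_rfl hs.le) (g1 hc1)
    · -- b < 2/3
      rcases le_or_gt (1/3) a with ha13 | ha13
      · -- inside [1/3, 2/3]
        have c1 : Cov f 1 a b (2 - 3*b) (2 - 3*a) := cov3 hc3 ha13 hb23.le
        exact good_of_cov c1 (IH _ _ (by linarith) (by linarith) (by nlinarith))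
      · -- straddle at 1/3 : 1/6 < a < 1/3 < b < 2/3
        rcases le_or_gt (b - 1/3) (1/3 - a) with hcase | hcase
        · -- left half bigger
          have c1 : Cov f 1 a b (2*a + 1/3) 1 :=
            cov_mono (cov2 hc2 ha16.le le_rfl) le_rfl hb13.le le_rfl (by norm_num)
          have c2 : Cov f 1 (2*a + 1/3) 1 (2*a - 1/3) (1/3) :=
            cov_mono (cov4 hc4 (by linarith) le_rfl) le_rfl le_rfl (by linarith) (by norm_num)
          have c12 : Cov f 2 a b (2*a - 1/3) (1/3) := cov_comp c1 c2
          rcases le_or_gt (1/6) (2*a - 1/3) with hs | hs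
          · have c3 : Cov f 1 (2*a - 1/3) (1/3) (2*(2*a - 1/3) + 1/3) 1 :=
              cov_mono (cov2 hc2 hs le_rfl) le_rfl le_rfl le_rfl (by norm_num)
            exact good_of_cov (cov_comp c12 c3) (IH _ 1 (by linarith) le_rfl (by nlinarith))
          · exact good_of_cov (cov_mono c12 le_rfl le_rfl hs.le le_rfl) (g2 hc2)
        · -- right half bigger
          have c1 : Cov f 1 a b (2 - 3*b) 1 :=
            cov_mono (cov3 hc3 le_rfl hb23.le) ha13.le le_rfl le_rfl (by norm_num)
          rcases le_or_gt (2/3) (2 - 3*b) with hm | hm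
          · have c2 : Cov f 1 (2 - 3*b) 1 (4/3 - 3*b) (1/3) :=
              cov_mono (cov4 hc4 hm le_rfl) le_rfl le_rfl (by linarith) (by norm_num)
            have c12 : Cov f 2 a b (4/3 - 3*b) (1/3) := cov_comp c1 c2
            rcases le_or_gt (1/6) (4/3 - 3*b) with hs | hs
            · have c3 : Cov f 1 (4/3 - 3*b) (1/3) (2*(4/3 - 3*b) + 1/3) 1 :=
                cov_mono (cov2 hc2 hs le_rfl) le_rfl le_rfl le_rfl (by norm_num)
              exact good_of_cov (cov_comp c12 c3) (IH _ 1 (by linarith) le_rfl (by nlinarith))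
            · exact good_of_cov (cov_mono c12 le_rfl le_rfl hs.le le_rfl) (g2 hc2)
          · exact ⟨1, cov_mono c1 le_rfl le_rfl hm.le le_rfl⟩

lemma good_all (H : Pieces f) {a b : ℝ} (ha : 0 ≤ a) (hb : b ≤ 1) (hab : a < b) :
    Good f a b := by
  obtain ⟨k, hk⟩ := exists_pow_lt_of_lt_one (show (0:ℝ) < 3*(b - a) by linarith)
    (by norm_num : (5:ℝ)/6 < 1)
  exact indStep H k a b ha hb (by nlinarith)

end Aux

theorem example31_stronglyIndecomposable
    (f : Set.Icc (0:ℝ) 1 → Set.Icc (0:ℝ) 1) (hf : Continuous f)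
    (h1 : ∀ x : Set.Icc (0:ℝ) 1, (x:ℝ) ≤ 1/6 → (f x : ℝ) = -2*(x:ℝ) + 1)
    (h2 : ∀ x : Set.Icc (0:ℝ) 1, 1/6 ≤ (x:ℝ) → (x:ℝ) ≤ 1/3 → (f x : ℝ) = 2*(x:ℝ) + 1/3)
    (h3 : ∀ x : Set.Icc (0:ℝ) 1, 1/3 ≤ (x:ℝ) → (x:ℝ) ≤ 2/3 → (f x : ℝ) = -3*(x:ℝ) + 2)
    (h4 : ∀ x : Set.Icc (0:ℝ) 1, 2/3 ≤ (x:ℝ) → (f x : ℝ) = (x:ℝ) - 2/3) :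
    StronglyIndecomposable f := by
  have H : Pieces f := ⟨h1, h2, h3, h4⟩
  intro A hclosed hinv hint
  -- iterates stay in invariant sets
  have hiter : ∀ n m (x : Set.Icc (0:ℝ) 1), x ∈ A n → f^[m] x ∈ A n := by
    intro n m
    induction m with
    | zero => intro x hx; simpa using hx
    | succ m ih =>
      intro x hx
      rw [Function.iterate_succ_apply']
      exact hinv n ⟨_, ih x hx, rfl⟩
  -- every invariant closed set with interior contains B = [0,1/3] ∪ [2/3,1]
  have key : ∀ n, ∀ z : Set.Icc (0:ℝ) 1, ((z:ℝ) ≤ 1/3 ∨ 2/3 ≤ (z:ℝ)) → z ∈ A n := by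
    intro n
    obtain ⟨x, hx⟩ := hint n
    have hnhds : A n ∈ nhds x := mem_interior_iff_mem_nhds.mp hx
    obtain ⟨ε, hε, hball⟩ := Metric.mem_nhds_iff.mp hnhds
    set a : ℝ := max 0 ((x:ℝ) - ε/2) with hadef
    set b : ℝ := min 1 ((x:ℝ) + ε/2) with hbdef
    have hx0 : (0:ℝ) ≤ (x:ℝ) := x.2.1
    have hx1 : (x:ℝ) ≤ 1 := x.2.2
    have ha0 : 0 ≤ a := le_max_left _ _
    have hb1 : b ≤ 1 := min_le_left _ _
    have haxe : a ≤ (x:ℝ) := max_le hx0 (by linarith)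
    have hbxe : (x:ℝ) ≤ b := le_min hx1 (by linarith)
    have hax : (x:ℝ) - ε/2 ≤ a := le_max_right _ _
    have hbx : b ≤ (x:ℝ) + ε/2 := min_le_right _ _
    have hab : a < b :=
      max_lt (lt_min (by norm_num) (by linarith)) (lt_min (by linarith) (by linarith))
    have hsub : ∀ z : Set.Icc (0:ℝ) 1, a ≤ (z:ℝ) → (z:ℝ) ≤ b → z ∈ A n := by
      intro z hz1 hz2
      apply hball
      rw [Metric.mem_ball, Subtype.dist_eq, Real.dist_eq, abs_lt]
      constructor <;> linarith
    obtain ⟨m, hcov⟩ := good_all H ha0 hb1 hab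
    have hC4 : ∀ z : Set.Icc (0:ℝ) 1, 2/3 ≤ (z:ℝ) → z ∈ A n := by
      intro z hz
      obtain ⟨w, hw1, hw2, hw3⟩ := hcov (z:ℝ) hz z.2.2
      have hwz : f^[m] w = z := Subtype.coe_injective hw3
      exact hwz ▸ hiter n m w (hsub w hw1 hw2)
    intro z hz
    rcases hz with hz | hz
    · obtain ⟨w, hw1, hw2, hw3⟩ := cov4 h4 le_rfl le_rfl (z:ℝ) (by simpa using z.2.1) (by linarith)
      have hwz : f^[1] w = z := Subtype.coe_injective hw3
      exact hwz ▸ hiter n 1 w (hC4 w hw1)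
    · exact hC4 z hz
  have hsubset : {z : Set.Icc (0:ℝ) 1 | (z:ℝ) < 1/3} ⊆ ⋂ n, A n := fun z hz =>
    Set.mem_iInter.mpr fun n => key n z (Or.inl (le_of_lt hz))
  have hopen : IsOpen {z : Set.Icc (0:ℝ) 1 | (z:ℝ) < 1/3} :=
    isOpen_lt continuous_subtype_val continuous_const
  exact ⟨⟨1/6, by norm_num⟩, interior_maximal hsubset hopen (by norm_num)⟩
end

section
/- Let f : [0,1] → [0,1] be the continuous piecewise-linear map defined by f(x) = -2x + 1 for x ∈ [0, 1/6], f(x) = 2x + 1/3 for x ∈ [1/6, 1/3], f(x) = -3x + 2 for x ∈ [1/3, 2/3], and f(x) = x - 2/3 for x ∈ [2/3, 1]. Then f is not topologically transitive. -/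
theorem example31_not_transitive
    (f : Set.Icc (0:ℝ) 1 → Set.Icc (0:ℝ) 1) (hf : Continuous f)
    (h1 : ∀ x : Set.Icc (0:ℝ) 1, (x:ℝ) ≤ 1/6 → (f x : ℝ) = -2*(x:ℝ) + 1)
    (h2 : ∀ x : Set.Icc (0:ℝ) 1, 1/6 ≤ (x:ℝ) → (x:ℝ) ≤ 1/3 → (f x : ℝ) = 2*(x:ℝ) + 1/3)
    (h3 : ∀ x : Set.Icc (0:ℝ) 1, 1/3 ≤ (x:ℝ) → (x:ℝ) ≤ 2/3 → (f x : ℝ) = -3*(x:ℝ) + 2)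
    (h4 : ∀ x : Set.Icc (0:ℝ) 1, 2/3 ≤ (x:ℝ) → (f x : ℝ) = (x:ℝ) - 2/3) :
    ¬ TopTransitive f := by
  -- the set A = [0,1/3] ∪ [2/3,1] is invariant
  have hA : ∀ x : Set.Icc (0:ℝ) 1, ((x:ℝ) ≤ 1/3 ∨ 2/3 ≤ (x:ℝ)) →
      ((f x : ℝ) ≤ 1/3 ∨ 2/3 ≤ (f x : ℝ)) := by
    intro x hx
    rcases hx with hx | hx
    · rcases le_or_gt (x:ℝ) (1/6) with h | h
      · right; rw [h1 x h]; have := x.2.1; linarith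
      · right; rw [h2 x h.le hx]; linarith
    · left; rw [h4 x hx]; have := x.2.2; linarith
  have hiter : ∀ (n : ℕ) (x : Set.Icc (0:ℝ) 1), ((x:ℝ) ≤ 1/3 ∨ 2/3 ≤ (x:ℝ)) →
      ((f^[n] x : ℝ) ≤ 1/3 ∨ 2/3 ≤ (f^[n] x : ℝ)) := by
    intro n
    induction n with
    | zero => intro x hx; simpa using hx
    | succ n ih =>
      intro x hx
      rw [Function.iterate_succ_apply']
      exact hA _ (ih x hx)
  intro htrans
  set U : Set (Set.Icc (0:ℝ) 1) := Subtype.val ⁻¹' Set.Ioo 0 (1/6) with hU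
  set V : Set (Set.Icc (0:ℝ) 1) := Subtype.val ⁻¹' Set.Ioo (1/3) (2/3) with hV
  obtain ⟨n, y, ⟨x, hxU, hxy⟩, hyV⟩ :=
    htrans U V (isOpen_Ioo.preimage continuous_subtype_val)
      (isOpen_Ioo.preimage continuous_subtype_val)
      ⟨⟨1/12, by norm_num⟩, by constructor <;> norm_num⟩
      ⟨⟨1/2, by norm_num⟩, by constructor <;> norm_num⟩
  have hx : (x:ℝ) ≤ 1/3 ∨ 2/3 ≤ (x:ℝ) := Or.inl (by have := hxU.2; linarith)
  have := hiter n x hx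
  rw [hxy] at this
  have h1' := hyV.1
  have h2' := hyV.2
  rcases this with h | h <;> linarith
end

section
/- Let f : [0,1] → [0,1] be the continuous piecewise-linear map defined by f(x) = -2x + 1 for x ∈ [0, 1/6], f(x) = 2x + 1/3 for x ∈ [1/6, 1/3], f(x) = -3x + 2 for x ∈ [1/3, 2/3], and f(x) = x - 2/3 for x ∈ [2/3, 1]. Then for every x ∈ (1/3, 4/9) and every n ≥ 1, f^n(x) ∉ (1/3, 2/3). -/
theorem example31_orbit_escapes_middle_third
    (f : Set.Icc (0:ℝ) 1 → Set.Icc (0:ℝ) 1) (hf : Continuous f)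
    (h1 : ∀ x : Set.Icc (0:ℝ) 1, (x:ℝ) ≤ 1/6 → (f x : ℝ) = -2*(x:ℝ) + 1)
    (h2 : ∀ x : Set.Icc (0:ℝ) 1, 1/6 ≤ (x:ℝ) → (x:ℝ) ≤ 1/3 → (f x : ℝ) = 2*(x:ℝ) + 1/3)
    (h3 : ∀ x : Set.Icc (0:ℝ) 1, 1/3 ≤ (x:ℝ) → (x:ℝ) ≤ 2/3 → (f x : ℝ) = -3*(x:ℝ) + 2)
    (h4 : ∀ x : Set.Icc (0:ℝ) 1, 2/3 ≤ (x:ℝ) → (f x : ℝ) = (x:ℝ) - 2/3) :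
    ∀ x : Set.Icc (0:ℝ) 1, (x:ℝ) ∈ Set.Ioo (1/3 : ℝ) (4/9) →
      ∀ n : ℕ, 1 ≤ n → (f^[n] x : ℝ) ∉ Set.Ioo (1/3 : ℝ) (2/3) := by
  intro x hx n hn
  -- the forward invariant set
  set P : Set.Icc (0:ℝ) 1 → Prop := fun y => (y:ℝ) ≤ 1/3 ∨ 2/3 ≤ (y:ℝ) with hP
  have step : ∀ y, P y → P (f y) := by
    intro y hy
    rcases hy with hy | hy
    · right
      rcases le_or_gt (y:ℝ) (1/6) with h | h
      · have := h1 y h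
        have hy0 := y.2.1
        rw [this]; linarith
      · have := h2 y h.le hy
        rw [this]; linarith
    · left
      have := h4 y hy
      have hy1 := y.2.2
      rw [this]; linarith
  have iter : ∀ m : ℕ, ∀ y, P y → P (f^[m] y) := by
    intro m
    induction m with
    | zero => intro y hy; simpa using hy
    | succ k ih =>
      intro y hy
      rw [Function.iterate_succ_apply]
      exact ih _ (step y hy)
  obtain ⟨m, rfl⟩ : ∃ m, n = m + 1 := ⟨n - 1, by omega⟩
  have hfx : P (f x) := by
    right
    have := h3 x hx.1.le (by linarith [hx.2] : (x:ℝ) ≤ 2/3)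
    rw [this]; linarith [hx.2]
  have := iter m (f x) hfx
  rw [Function.iterate_succ_apply]
  rcases this with h | h
  · intro hc; exact absurd hc.1 (not_lt.mpr h)
  · intro hc; exact absurd hc.2 (not_lt.mpr h)
end

section
/- Let g : [0, 1/3] → [0, 1/3] be the tent-type map g(x) = |2x - 1/3|. Then g is topologically mixing: for any two nonempty open subsets U, V of [0, 1/3] there exists N ≥ 0 such that g^n(U) ∩ V ≠ ∅ for all n ≥ N. -/
/-- A self-map of a topological space is topologically mixing if for any two nonempty
open sets `U, V` all sufficiently large iterate images of `U` meet `V`. -/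
def TopMixing {Y : Type*} [TopologicalSpace Y] (g : Y → Y) : Prop :=
  ∀ U V : Set Y, IsOpen U → IsOpen V → U.Nonempty → V.Nonempty →
    ∃ N : ℕ, ∀ n : ℕ, N ≤ n → (g^[n] '' U ∩ V).Nonempty

/-- The tent-type map on the reals. -/
noncomputable def Gm : ℝ → ℝ := fun x => |2*x - 1/3|

lemma img1 {a b : ℝ} (hb : b ≤ 1/6) :
    Set.Ioo (1/3 - 2*b) (1/3 - 2*a) ⊆ Gm '' Set.Ioo a b := by
  rintro y ⟨h1, h2⟩
  have hy0 : 0 ≤ y := by linarith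
  refine ⟨(1/3 - y)/2, ⟨by linarith, by linarith⟩, ?_⟩
  simp only [Gm]
  rw [abs_of_nonpos (by linarith)]
  ring

lemma img2 {a b : ℝ} (ha : 1/6 ≤ a) :
    Set.Ioo (2*a - 1/3) (2*b - 1/3) ⊆ Gm '' Set.Ioo a b := by
  rintro y ⟨h1, h2⟩
  refine ⟨(y + 1/3)/2, ⟨by linarith, by linarith⟩, ?_⟩
  simp only [Gm]
  rw [abs_of_nonneg (by linarith)]
  ring

lemma iter_succ_img (N : ℕ) (S : Set ℝ) :
    Gm^[N] '' (Gm '' S) = Gm^[N+1] '' S := by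
  rw [Function.iterate_succ, Set.image_comp]

lemma escape {δ : ℝ} (hδ : 1/6 < δ) :
    Set.Ioo (0:ℝ) (1/3) ⊆ Gm^[1] '' Set.Ioo (1/3 - δ) (1/3) := by
  rw [Function.iterate_one]
  intro y hy
  apply Set.image_mono (Set.Ioo_subset_Ioo (by linarith) le_rfl :
    Set.Ioo (1/6:ℝ) (1/3) ⊆ Set.Ioo (1/3 - δ) (1/3))
  apply img2 le_rfl
  exact ⟨by linarith [hy.1], by linarith [hy.2]⟩

lemma anchor : ∀ k : ℕ, ∀ δ : ℝ, 0 < δ → δ ≤ 1/3 → 1/6 < 2^k * δ →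
    ∃ N, Set.Ioo (0:ℝ) (1/3) ⊆ Gm^[N] '' Set.Ioo (1/3 - δ) (1/3) := by
  intro k
  induction k with
  | zero =>
    intro δ hδ hδ3 hk
    simp only [pow_zero, one_mul] at hk
    exact ⟨1, escape hk⟩
  | succ k ih =>
    intro δ hδ hδ3 hk
    by_cases hcase : 1/6 < δ
    · exact ⟨1, escape hcase⟩
    · push_neg at hcase
      have hk' : 1/6 < 2^k * (2*δ) := by
        rw [pow_succ] at hk; nlinarith [hk]
      obtain ⟨N, hN⟩ := ih (2*δ) (by linarith) (by linarith) hk'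
      refine ⟨N+1, ?_⟩
      have step : Set.Ioo (1/3 - 2*δ) (1/3) ⊆ Gm '' Set.Ioo (1/3 - δ) (1/3) := by
        intro y hy
        apply img2 (by linarith : (1:ℝ)/6 ≤ 1/3 - δ)
        exact ⟨by linarith [hy.1], by linarith [hy.2]⟩
      calc Set.Ioo (0:ℝ) (1/3) ⊆ Gm^[N] '' Set.Ioo (1/3 - 2*δ) (1/3) := hN
        _ ⊆ Gm^[N] '' (Gm '' Set.Ioo (1/3 - δ) (1/3)) := Set.image_mono step
        _ = Gm^[N+1] '' Set.Ioo (1/3 - δ) (1/3) := iter_succ_img N _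

lemma middle {a b : ℝ} (ha : a < 1/6) (hb : 1/6 < b) (hb3 : b ≤ 1/3) :
    ∃ δ, 0 < δ ∧ δ ≤ 1/3 ∧ Set.Ioo (1/3 - δ) (1/3) ⊆ Gm^[2] '' Set.Ioo a b := by
  set ε := min (2*b - 1/3) (1/6) with hε
  have hεb : ε ≤ 2*b - 1/3 := min_le_left _ _
  have hε6 : ε ≤ 1/6 := min_le_right _ _
  have hε0 : 0 < ε := lt_min (by linarith) (by norm_num)
  refine ⟨2*ε, by linarith, by linarith, ?_⟩
  have s1 : Set.Ioo (0:ℝ) ε ⊆ Gm '' Set.Ioo a b := by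
    intro y hy
    apply Set.image_mono (Set.Ioo_subset_Ioo (le_of_lt ha) le_rfl :
      Set.Ioo (1/6:ℝ) b ⊆ Set.Ioo a b)
    apply img2 le_rfl
    exact ⟨by linarith [hy.1], by linarith [hy.2]⟩
  have s2 : Set.Ioo (1/3 - 2*ε) (1/3) ⊆ Gm '' Set.Ioo 0 ε := by
    intro y hy
    apply img1 hε6
    exact ⟨hy.1, by linarith [hy.2]⟩
  calc Set.Ioo (1/3 - 2*ε) (1/3) ⊆ Gm '' Set.Ioo 0 ε := s2
    _ ⊆ Gm '' (Gm '' Set.Ioo a b) := Set.image_mono s1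
    _ = Gm^[1+1] '' Set.Ioo a b := iter_succ_img 1 _

lemma start : ∀ k : ℕ, ∀ a b : ℝ, 0 ≤ a → a < b → b ≤ 1/3 → 1/6 < 2^k * (b - a) →
    ∃ N δ, 0 < δ ∧ δ ≤ 1/3 ∧ Set.Ioo (1/3 - δ) (1/3) ⊆ Gm^[N] '' Set.Ioo a b := by
  intro k
  induction k with
  | zero =>
    intro a b ha hab hb hk
    simp only [pow_zero, one_mul] at hk
    obtain ⟨δ, h1, h2, h3⟩ := middle (by linarith : a < 1/6) (by linarith : 1/6 < b) hb
    exact ⟨2, δ, h1, h2, h3⟩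
  | succ k ih =>
    intro a b ha hab hb hk
    by_cases h1 : b ≤ 1/6
    · have hk' : 1/6 < 2^k * ((1/3 - 2*a) - (1/3 - 2*b)) := by
        rw [pow_succ] at hk; nlinarith [hk]
      obtain ⟨N, δ, hδ0, hδ3, hN⟩ := ih (1/3 - 2*b) (1/3 - 2*a)
        (by linarith) (by linarith) (by linarith) hk'
      refine ⟨N+1, δ, hδ0, hδ3, ?_⟩
      calc Set.Ioo (1/3 - δ) (1/3) ⊆ Gm^[N] '' Set.Ioo (1/3 - 2*b) (1/3 - 2*a) := hN
        _ ⊆ Gm^[N] '' (Gm '' Set.Ioo a b) := Set.image_mono (img1 h1)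
        _ = Gm^[N+1] '' Set.Ioo a b := iter_succ_img N _
    · by_cases h2 : 1/6 ≤ a
      · have hk' : 1/6 < 2^k * ((2*b - 1/3) - (2*a - 1/3)) := by
          rw [pow_succ] at hk; nlinarith [hk]
        obtain ⟨N, δ, hδ0, hδ3, hN⟩ := ih (2*a - 1/3) (2*b - 1/3)
          (by linarith) (by linarith) (by linarith) hk'
        refine ⟨N+1, δ, hδ0, hδ3, ?_⟩
        calc Set.Ioo (1/3 - δ) (1/3) ⊆ Gm^[N] '' Set.Ioo (2*a - 1/3) (2*b - 1/3) := hN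
          _ ⊆ Gm^[N] '' (Gm '' Set.Ioo a b) := Set.image_mono (img2 h2)
          _ = Gm^[N+1] '' Set.Ioo a b := iter_succ_img N _
      · push_neg at h1 h2
        obtain ⟨δ, hδ0, hδ3, h3⟩ := middle h2 h1 hb
        exact ⟨2, δ, hδ0, hδ3, h3⟩

lemma full_step {T : Set ℝ} (hT : Set.Ioo (0:ℝ) (1/3) ⊆ T) :
    Set.Ioo (0:ℝ) (1/3) ⊆ Gm '' T := by
  intro y hy
  apply Set.image_mono (subset_trans
    (Set.Ioo_subset_Ioo le_rfl (by norm_num) : Set.Ioo (0:ℝ) (1/6) ⊆ Set.Ioo 0 (1/3)) hT)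
  apply img1 (le_rfl : (1:ℝ)/6 ≤ 1/6)
  exact ⟨by linarith [hy.1], by linarith [hy.2]⟩

lemma main_real {a b : ℝ} (ha : 0 ≤ a) (hab : a < b) (hb : b ≤ 1/3) :
    ∃ N, ∀ n, N ≤ n → Set.Ioo (0:ℝ) (1/3) ⊆ Gm^[n] '' Set.Ioo a b := by
  obtain ⟨k, hk⟩ := pow_unbounded_of_one_lt ((1/6)/(b-a)) (by norm_num : (1:ℝ) < 2)
  have hk' : 1/6 < 2^k * (b - a) := by
    rw [div_lt_iff₀ (by linarith)] at hk; linarith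
  obtain ⟨N1, δ, hδ0, hδ3, h1⟩ := start k a b ha hab hb hk'
  obtain ⟨k2, hk2⟩ := pow_unbounded_of_one_lt ((1/6)/δ) (by norm_num : (1:ℝ) < 2)
  have hk2' : 1/6 < 2^k2 * δ := by
    rw [div_lt_iff₀ hδ0] at hk2; linarith
  obtain ⟨N2, h2⟩ := anchor k2 δ hδ0 hδ3 hk2'
  have base : ∀ m : ℕ, Set.Ioo (0:ℝ) (1/3) ⊆ Gm^[N2 + N1 + m] '' Set.Ioo a b := by
    intro m
    induction m with
    | zero =>
      have : Gm^[N2 + N1] '' Set.Ioo a b = Gm^[N2] '' (Gm^[N1] '' Set.Ioo a b) := by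
        rw [Function.iterate_add, Set.image_comp]
      rw [Nat.add_zero, this]
      exact subset_trans h2 (Set.image_mono h1)
    | succ m ih =>
      have : Gm^[N2 + N1 + (m+1)] '' Set.Ioo a b
          = Gm '' (Gm^[N2 + N1 + m] '' Set.Ioo a b) := by
        rw [← Nat.add_assoc, Function.iterate_succ', Set.image_comp]
      rw [this]
      exact full_step ih
  refine ⟨N2 + N1, fun n hn => ?_⟩
  obtain ⟨m, rfl⟩ := Nat.exists_eq_add_of_le hn
  exact base m

lemma open_interval {U : Set (Set.Icc (0:ℝ) (1/3))} (hU : IsOpen U) (hne : U.Nonempty) :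
    ∃ a b : ℝ, 0 ≤ a ∧ a < b ∧ b ≤ 1/3 ∧ Set.Ioo a b ⊆ Subtype.val '' U := by
  obtain ⟨p, hp⟩ := hne
  rw [isOpen_induced_iff] at hU
  obtain ⟨W, hW, hWU⟩ := hU
  have hpW : (p : ℝ) ∈ W := by
    rw [← hWU] at hp; exact hp
  obtain ⟨ε, hε, hball⟩ := Metric.isOpen_iff.mp hW _ hpW
  rw [Real.ball_eq_Ioo] at hball
  have hp1 : 0 ≤ (p:ℝ) := p.2.1
  have hp2 : (p:ℝ) ≤ 1/3 := p.2.2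
  refine ⟨max ((p:ℝ) - ε) 0, min ((p:ℝ) + ε) (1/3), le_max_right _ _, ?_, min_le_right _ _, ?_⟩
  · apply max_lt <;> apply lt_min <;> linarith
  · rintro x ⟨hx1, hx2⟩
    have hx0 : 0 ≤ x := le_of_lt (lt_of_le_of_lt (le_max_right _ _) hx1)
    have hx3 : x ≤ 1/3 := le_of_lt (lt_of_lt_of_le hx2 (min_le_right _ _))
    refine ⟨⟨x, hx0, hx3⟩, ?_, rfl⟩
    rw [← hWU]
    exact hball ⟨lt_of_le_of_lt (le_max_left _ _) hx1,
      lt_of_lt_of_le hx2 (min_le_left _ _)⟩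

theorem tent_type_map_topMixing
    (g : Set.Icc (0:ℝ) (1/3) → Set.Icc (0:ℝ) (1/3))
    (hg : ∀ x : Set.Icc (0:ℝ) (1/3), (g x : ℝ) = |2*(x:ℝ) - 1/3|) :
    TopMixing g := by
  intro U V hUo hVo hUne hVne
  obtain ⟨a, b, ha, hab, hb, hU⟩ := open_interval hUo hUne
  obtain ⟨a', b', ha', hab', hb', hV⟩ := open_interval hVo hVne
  obtain ⟨N, hN⟩ := main_real ha hab hb
  have hsemi : Function.Semiconj (Subtype.val : Set.Icc (0:ℝ) (1/3) → ℝ) g Gm := by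
    intro x
    exact hg x
  refine ⟨N, fun n hn => ?_⟩
  set v : ℝ := (a' + b')/2 with hv
  have hv1 : v ∈ Set.Ioo a' b' := ⟨by simp [hv]; linarith, by simp [hv]; linarith⟩
  have hv2 : v ∈ Set.Ioo (0:ℝ) (1/3) := ⟨by linarith [hv1.1], by linarith [hv1.2]⟩
  have h1 : v ∈ Gm^[n] '' (Subtype.val '' U) :=
    Set.image_mono hU (hN n hn hv2)
  have himg : Subtype.val '' (g^[n] '' U) = Gm^[n] '' (Subtype.val '' U) := by
    rw [← Set.image_comp, ← Set.image_comp, (hsemi.iterate_right n).comp_eq]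
  rw [← himg] at h1
  obtain ⟨q, hq, hqv⟩ := h1
  obtain ⟨p, hpV, hpv⟩ := hV hv1
  have hqp : q = p := Subtype.ext (hqv.trans hpv.symm)
  exact ⟨q, hq, hqp ▸ hpV⟩
end

section
/- There exists a continuous map f : [0,1] → [0,1] such that f is indecomposable, f is not strongly indecomposable, and the set of periodic points of f is exactly {0, 1}. In particular, for interval maps, indecomposability implies neither strong indecomposability nor density of periodic points. -/
open Set Metric

namespace TentCascade

/-- The peak points `aa k = 1 - 2^{-(k+1)}`. -/
noncomputable def aa (k : ℕ) : ℝ := 1 - (1/2 : ℝ)^(k+1)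

/-- The peak set. -/
noncomputable def S : Set ℝ := insert 1 (Set.range aa)

lemma aa_lt_one (k : ℕ) : aa k < 1 := by
  have : (0:ℝ) < (1/2:ℝ)^(k+1) := by positivity
  simp only [aa]; linarith

lemma aa_strictMono : StrictMono aa := by
  intro i j hij
  have : (1/2:ℝ)^(j+1) < (1/2:ℝ)^(i+1) := by
    apply pow_lt_pow_right_of_lt_one₀ (by norm_num) (by norm_num) (by omega)
  simp only [aa]; linarith

lemma aa_zero : aa 0 = 1/2 := by norm_num [aa]

lemma half_le_aa (k : ℕ) : 1/2 ≤ aa k := by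
  rcases Nat.eq_zero_or_pos k with h | h
  · simp [h, aa_zero]
  · exact le_of_lt (aa_zero ▸ aa_strictMono h)

lemma aa_nonneg (k : ℕ) : 0 ≤ aa k := le_trans (by norm_num) (half_le_aa k)

lemma S_nonempty : S.Nonempty := ⟨1, Or.inl rfl⟩

lemma mem_S_iff {s : ℝ} : s ∈ S ↔ s = 1 ∨ ∃ k, aa k = s := by
  simp [S]

lemma one_mem_S : (1:ℝ) ∈ S := Or.inl rfl

lemma aa_mem_S (k : ℕ) : aa k ∈ S := Or.inr ⟨k, rfl⟩

lemma half_le_of_mem_S {s : ℝ} (hs : s ∈ S) : 1/2 ≤ s := by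
  rcases mem_S_iff.1 hs with h | ⟨k, hk⟩
  · rw [h]; norm_num
  · exact hk ▸ half_le_aa k

lemma le_one_of_mem_S {s : ℝ} (hs : s ∈ S) : s ≤ 1 := by
  rcases mem_S_iff.1 hs with h | ⟨k, hk⟩
  · exact h.le
  · exact hk ▸ (aa_lt_one k).le

/-- Bracketing: any `x ∈ [1/2, 1)` lies in some `[aa k, aa (k+1))`. -/
lemma bracket {x : ℝ} (h1 : 1/2 ≤ x) (h2 : x < 1) :
    ∃ k, aa k ≤ x ∧ x < aa (k+1) := by
  have hex : ∃ n, x < aa n := by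
    have h3 : 0 < 1 - x := by linarith
    obtain ⟨n, hn⟩ := exists_pow_lt_of_lt_one h3 (by norm_num : (1/2:ℝ) < 1)
    refine ⟨n, ?_⟩
    have : (1/2:ℝ)^(n+1) ≤ (1/2:ℝ)^n :=
      pow_le_pow_of_le_one (by norm_num) (by norm_num) (by omega)
    simp only [aa]; linarith
  classical
  have hxn : x < aa (Nat.find hex) := Nat.find_spec hex
  rcases Nat.eq_zero_or_pos (Nat.find hex) with h0 | hpos
  · rw [h0, aa_zero] at hxn; linarith
  · obtain ⟨m, hm⟩ := Nat.exists_eq_add_of_lt hpos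
    rw [zero_add] at hm
    have hle : ¬ x < aa m := Nat.find_min hex (by omega)
    exact ⟨m, not_lt.1 hle, by rw [← hm]; exact hxn⟩

/-- No point of `S` strictly between consecutive peaks. -/
lemma gap_disjoint_S {k : ℕ} {s : ℝ} (hs : s ∈ S) : ¬ (aa k < s ∧ s < aa (k+1)) := by
  rintro ⟨h1, h2⟩
  rcases mem_S_iff.1 hs with h | ⟨j, hj⟩
  · exact absurd (h ▸ h2) (not_lt.2 (aa_lt_one (k+1)).le)
  · subst hj
    have hk : k < j := aa_strictMono.lt_iff_lt.1 h1
    have hk2 : j < k + 1 := aa_strictMono.lt_iff_lt.1 h2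
    omega

lemma isClosed_S : IsClosed S := by
  rw [← isOpen_compl_iff, isOpen_iff_mem_nhds]
  intro x hx
  rcases lt_trichotomy x 1 with hlt | heq | hgt
  · rcases lt_or_ge x (1/2) with h | h
    · exact Filter.mem_of_superset (Ioo_mem_nhds (show x - 1 < x by linarith) h)
        (fun y hy hyS => absurd (half_le_of_mem_S hyS) (not_le.2 hy.2))
    · obtain ⟨k, hk1, hk2⟩ := bracket h hlt
      have hne : aa k ≠ x := fun he => hx (he ▸ aa_mem_S k)
      have hk1' : aa k < x := lt_of_le_of_ne hk1 hne
      exact Filter.mem_of_superset (Ioo_mem_nhds hk1' hk2)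
        (fun y hy hyS => gap_disjoint_S hyS ⟨hy.1, hy.2⟩)
  · exact absurd (heq ▸ one_mem_S) hx
  · exact Filter.mem_of_superset (Ioo_mem_nhds hgt (lt_add_one x))
      (fun y hy hyS => absurd (le_one_of_mem_S hyS) (not_le.2 hy.1))

lemma countable_S : S.Countable := (Set.countable_range aa).insert 1

end TentCascade

namespace TentCascade

lemma aa_succ_sub (k : ℕ) : aa (k+1) - aa k = (1/2:ℝ)^(k+2) := by
  simp only [aa]; ring_nf

/-- The tent cascade map. -/
noncomputable def F (x : ℝ) : ℝ := 1 - 2 * infDist x S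

lemma continuous_F : Continuous F := by
  unfold F
  exact continuous_const.sub (continuous_const.mul (continuous_infDist_pt S))

lemma F_le_one (x : ℝ) : F x ≤ 1 := by
  have : 0 ≤ infDist x S := infDist_nonneg
  simp only [F]; linarith

lemma F_eq_one_iff {x : ℝ} : F x = 1 ↔ x ∈ S := by
  have h0 : F x = 1 ↔ infDist x S = 0 := by
    constructor <;> (intro h; simp only [F] at *; linarith)
  rw [h0]
  constructor
  · intro h
    have := (mem_closure_iff_infDist_zero S_nonempty).2 h
    rwa [isClosed_S.closure_eq] at this
  · exact infDist_zero_of_mem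

lemma F_one : F 1 = 1 := F_eq_one_iff.2 one_mem_S

lemma F_aa (k : ℕ) : F (aa k) = 1 := F_eq_one_iff.2 (aa_mem_S k)

lemma infDist_left {x : ℝ} (h : x ≤ 1/2) : infDist x S = 1/2 - x := by
  apply le_antisymm
  · calc infDist x S ≤ dist x (aa 0) := infDist_le_dist_of_mem (aa_mem_S 0)
      _ = 1/2 - x := by rw [aa_zero, Real.dist_eq, abs_of_nonpos (by linarith)]; ring
  · obtain ⟨s, hsS, hsd⟩ := isClosed_S.exists_infDist_eq_dist S_nonempty x
    rw [hsd, Real.dist_eq]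
    have := half_le_of_mem_S hsS
    rw [abs_of_nonpos (by linarith)]; linarith

lemma F_left {x : ℝ} (h : x ≤ 1/2) : F x = 2 * x := by
  rw [F, infDist_left h]; ring

lemma infDist_gap {x : ℝ} {k : ℕ} (h1 : aa k ≤ x) (h2 : x ≤ aa (k+1)) :
    infDist x S = min (x - aa k) (aa (k+1) - x) := by
  apply le_antisymm
  · rcases min_cases (x - aa k) (aa (k+1) - x) with ⟨he, _⟩ | ⟨he, _⟩ <;> rw [he]
    · calc infDist x S ≤ dist x (aa k) := infDist_le_dist_of_mem (aa_mem_S k)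
        _ = x - aa k := by rw [Real.dist_eq, abs_of_nonneg (by linarith)]
    · calc infDist x S ≤ dist x (aa (k+1)) := infDist_le_dist_of_mem (aa_mem_S (k+1))
        _ = aa (k+1) - x := by rw [Real.dist_eq, abs_of_nonpos (by linarith)]; ring
  · obtain ⟨s, hsS, hsd⟩ := isClosed_S.exists_infDist_eq_dist S_nonempty x
    rw [hsd, Real.dist_eq]
    have hcase : s ≤ aa k ∨ aa (k+1) ≤ s := by
      by_contra hc
      push_neg at hc
      exact gap_disjoint_S hsS ⟨hc.1, hc.2⟩
    rcases hcase with hle | hge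
    · rw [abs_of_nonneg (by linarith)]
      exact le_trans (min_le_left _ _) (by linarith)
    · rw [abs_of_nonpos (by linarith)]
      exact le_trans (min_le_right _ _) (by linarith)

end TentCascade

namespace TentCascade

/-- On a gap `[aa k, aa (k+1)]`, `F x ≥ aa (k+1)`. -/
lemma F_ge_gap {x : ℝ} {k : ℕ} (h1 : aa k ≤ x) (h2 : x ≤ aa (k+1)) : aa (k+1) ≤ F x := by
  have hd := infDist_gap h1 h2
  have hm : 2 * min (x - aa k) (aa (k+1) - x) ≤ (1/2:ℝ)^(k+2) := by
    have hsub := aa_succ_sub k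
    rcases le_total (x - aa k) (aa (k+1) - x) with h | h
    · rw [min_eq_left h]; linarith
    · rw [min_eq_right h]; linarith
  have : aa (k+1) = 1 - (1/2:ℝ)^(k+2) := by simp only [aa]
  simp only [F, hd]
  linarith

/-- `F x > x` strictly inside `(0,1)`. -/
lemma lt_F_of_mem {x : ℝ} (h0 : 0 < x) (h1 : x < 1) : x < F x := by
  rcases le_or_gt x (1/2) with h | h
  · rw [F_left h]; linarith
  · obtain ⟨k, hk1, hk2⟩ := bracket h.le h1
    have := F_ge_gap hk1 hk2.le
    have : aa (k+1) ≤ F x := this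
    linarith [hk2]

lemma le_F_of_mem {x : ℝ} (h0 : 0 ≤ x) (h1 : x ≤ 1) : x ≤ F x := by
  rcases eq_or_lt_of_le h0 with he | h0'
  · rw [← he, F_left (by norm_num)]; norm_num
  · rcases eq_or_lt_of_le h1 with he | h1'
    · rw [he, F_one]
    · exact (lt_F_of_mem h0' h1').le

lemma F_zero : F 0 = 0 := by rw [F_left (by norm_num)]; ring

lemma F_mem_Icc {x : ℝ} (h0 : 0 ≤ x) (h1 : x ≤ 1) : F x ∈ Set.Icc (0:ℝ) 1 := by
  refine ⟨le_trans h0 (le_F_of_mem h0 h1), F_le_one x⟩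

lemma F_mapsTo : Set.MapsTo F (Set.Icc (0:ℝ) 1) (Set.Icc (0:ℝ) 1) :=
  fun _ hx => F_mem_Icc hx.1 hx.2

end TentCascade

namespace TentCascade

/-- fold points (lap midpoints). -/
noncomputable def pp (k : ℕ) : ℝ := (aa k + aa (k+1)) / 2

lemma pp_mem_gap (k : ℕ) : aa k ≤ pp k ∧ pp k ≤ aa (k+1) := by
  have := aa_strictMono (lt_add_one k)
  constructor <;> (simp only [pp]; linarith)

lemma F_pp (k : ℕ) : F (pp k) = aa (k+1) := by
  have h := infDist_gap (pp_mem_gap k).1 (pp_mem_gap k).2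
  have hmin : min (pp k - aa k) (aa (k+1) - pp k) = (aa (k+1) - aa k) / 2 := by
    have : pp k - aa k = (aa (k+1) - aa k) / 2 := by simp only [pp]; ring
    have h2 : aa (k+1) - pp k = (aa (k+1) - aa k) / 2 := by simp only [pp]; ring
    rw [this, h2, min_self]
  have hsub := aa_succ_sub k
  have haa : aa (k+1) = 1 - (1/2:ℝ)^(k+2) := by simp only [aa]
  simp only [F, h, hmin]
  linarith

lemma img_up {c u v : ℝ} (huv : u ≤ v) :
    (fun x => c + 2*x) '' Set.Icc u v = Set.Icc (c + 2*u) (c + 2*v) := by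
  ext y
  constructor
  · rintro ⟨x, hx, rfl⟩
    refine ⟨?_, ?_⟩ <;> dsimp only <;> [linarith [hx.1]; linarith [hx.2]]
  · intro hy
    exact ⟨(y - c)/2, ⟨by linarith [hy.1], by linarith [hy.2]⟩, by ring⟩

lemma img_down {c u v : ℝ} (huv : u ≤ v) :
    (fun x => c - 2*x) '' Set.Icc u v = Set.Icc (c - 2*v) (c - 2*u) := by
  ext y
  constructor
  · rintro ⟨x, hx, rfl⟩
    refine ⟨?_, ?_⟩ <;> dsimp only <;> [linarith [hx.2]; linarith [hx.1]]
  · intro hy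
    exact ⟨(c - y)/2, ⟨by linarith [hy.2], by linarith [hy.1]⟩, by ring⟩

/-- If `[u,v] ⊆ [0,1]` misses all peaks and all fold points, then `F` is affine with
slope `±2` there, so the image is an interval of doubled length inside `[0,1]`. -/
lemma lap_image {u v : ℝ} (h0 : 0 ≤ u) (huv : u ≤ v) (h1 : v ≤ 1)
    (hS : ∀ x ∈ Set.Icc u v, x ∉ S) (hP : ∀ k, pp k ∉ Set.Icc u v) :
    ∃ u' v', v' - u' = 2*(v - u) ∧ Set.Icc u' v' ⊆ Set.Icc (0:ℝ) 1 ∧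
      F '' Set.Icc u v = Set.Icc u' v' := by
  have himg_sub : ∀ w z : ℝ, F '' Set.Icc u v = Set.Icc w z → Set.Icc w z ⊆ Set.Icc (0:ℝ) 1 := by
    intro w z he
    rw [← he]
    rintro y ⟨x, hx, rfl⟩
    exact F_mem_Icc (le_trans h0 hx.1) (le_trans hx.2 h1)
  have hv1 : v < 1 := lt_of_le_of_ne h1 (fun he => hS v ⟨huv, le_refl v⟩ (he ▸ one_mem_S))
  rcases lt_or_ge v (1/2) with hc | hc
  · -- left linear piece, F x = 2 x
    refine ⟨2*u, 2*v, by ring, himg_sub _ _ ?_, ?_⟩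
    all_goals {
      have he : F '' Set.Icc u v = (fun x => (0:ℝ) + 2*x) '' Set.Icc u v :=
        Set.image_congr (fun x hx => by rw [F_left (by linarith [hx.2] : x ≤ 1/2)]; ring)
      rw [he, img_up huv]
      norm_num }
  · -- inside a gap
    have hu : 1/2 < u := by
      rcases lt_or_ge (1/2 : ℝ) u with h | h
      · exact h
      · exact absurd (aa_zero ▸ aa_mem_S 0) (hS (1/2) ⟨h, hc⟩)
    obtain ⟨k, hk1, hk2⟩ := bracket (by linarith) (lt_of_le_of_lt huv hv1)
    have hka : aa k < u := lt_of_le_of_ne hk1 (fun he => hS u ⟨le_refl u, huv⟩ (he ▸ aa_mem_S k))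
    have hkb : v < aa (k+1) := by
      by_contra hcon
      push_neg at hcon
      exact hS (aa (k+1)) ⟨by linarith [hk2], hcon⟩ (aa_mem_S (k+1))
    have hpnot := hP k
    rcases lt_or_ge v (pp k) with hcase | hcase
    · -- decreasing lap: F x = 1 - 2 (x - aa k)
      refine ⟨1 + 2*aa k - 2*v, 1 + 2*aa k - 2*u, by ring, himg_sub _ _ ?_, ?_⟩
      all_goals {
        have he : F '' Set.Icc u v = (fun x => (1 + 2*aa k) - 2*x) '' Set.Icc u v := by
          apply Set.image_congr
          intro x hx
          have hx1 : aa k ≤ x := by linarith [hx.1]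
          have hx2 : x ≤ aa (k+1) := by linarith [hx.2]
          have hd := infDist_gap hx1 hx2
          have hmin : min (x - aa k) (aa (k+1) - x) = x - aa k := by
            apply min_eq_left
            have : x < pp k := lt_of_le_of_lt hx.2 hcase
            simp only [pp] at this; linarith
          rw [F, hd, hmin]; ring
        rw [he, img_down huv] }
    · -- increasing lap: F x = 1 - 2 (aa (k+1) - x)
      have hpu : pp k < u := by
        rcases lt_or_ge (pp k) u with h | h
        · exact h
        · exact absurd ⟨h, hcase⟩ hpnot
      refine ⟨1 - 2*aa (k+1) + 2*u, 1 - 2*aa (k+1) + 2*v, by ring, himg_sub _ _ ?_, ?_⟩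
      all_goals {
        have he : F '' Set.Icc u v = (fun x => (1 - 2*aa (k+1)) + 2*x) '' Set.Icc u v := by
          apply Set.image_congr
          intro x hx
          have hx1 : aa k ≤ x := by linarith [hx.1]
          have hx2 : x ≤ aa (k+1) := by linarith [hx.2]
          have hd := infDist_gap hx1 hx2
          have hmin : min (x - aa k) (aa (k+1) - x) = aa (k+1) - x := by
            apply min_eq_right
            have : pp k < x := lt_of_lt_of_le hpu hx.1
            simp only [pp] at this; linarith
          rw [F, hd, hmin]; ring
        rw [he, img_up huv] }

end TentCascade

namespace TentCascade

/-- Main expansion lemma: any nondegenerate interval in `[0,1]` eventually hits `1`. -/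
lemma reaches_one_aux : ∀ c : ℕ, ∀ u v : ℝ, 0 ≤ u → u ≤ v → v ≤ 1 →
    (1/2:ℝ)^c < v - u → ∃ n, (1:ℝ) ∈ F^[n] '' Set.Icc u v := by
  intro c
  induction c with
  | zero =>
    intro u v h0 huv h1 hlen
    norm_num at hlen
    linarith
  | succ c ih =>
    intro u v h0 huv h1 hlen
    classical
    by_cases hS : ∃ x ∈ Set.Icc u v, x ∈ S
    · obtain ⟨x, hx, hxS⟩ := hS
      exact ⟨1, ⟨x, hx, by simp [F_eq_one_iff.2 hxS]⟩⟩
    · by_cases hP : ∃ k, pp k ∈ Set.Icc u v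
      · obtain ⟨k, hk⟩ := hP
        refine ⟨2, ⟨pp k, hk, ?_⟩⟩
        simp [Function.iterate_succ_apply, F_pp k, F_aa (k+1)]
      · push_neg at hS hP
        obtain ⟨u', v', hlen', hsub, himg⟩ := lap_image h0 huv h1 hS hP
        have h0' : (0:ℝ) ≤ u' := by
          have : u' ∈ Set.Icc u' v' := ⟨le_refl _, by linarith⟩
          exact (hsub this).1
        have h1' : v' ≤ 1 := by
          have : v' ∈ Set.Icc u' v' := ⟨by linarith, le_refl _⟩
          exact (hsub this).2
        have hlen'' : (1/2:ℝ)^c < v' - u' := by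
          have : (1/2:ℝ)^(c+1) = (1/2:ℝ)^c / 2 := by rw [pow_succ]; ring
          rw [this] at hlen; linarith
        obtain ⟨n, hn⟩ := ih u' v' h0' (by linarith) h1' hlen''
        refine ⟨n + 1, ?_⟩
        rw [Function.iterate_succ, Set.image_comp, himg]
        exact hn

end TentCascade

namespace TentCascade

lemma countable_fiber (y : ℝ) : (F ⁻¹' {y}).Countable := by
  have hsub : F ⁻¹' {y} ⊆ ⋃ s ∈ S, {s - (1-y)/2, s + (1-y)/2} := by
    intro x hx
    simp only [Set.mem_preimage, Set.mem_singleton_iff] at hx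
    obtain ⟨s, hsS, hsd⟩ := isClosed_S.exists_infDist_eq_dist S_nonempty x
    have : dist x s = (1-y)/2 := by
      rw [← hsd]; simp only [F] at hx; linarith
    rw [Real.dist_eq] at this
    have hnn : 0 ≤ (1-y)/2 := this ▸ abs_nonneg _
    rcases (abs_eq hnn).1 this with h | h
    · exact Set.mem_biUnion hsS (by right; simp; linarith)
    · exact Set.mem_biUnion hsS (by left; linarith)
  exact Set.Countable.mono hsub
    (countable_S.biUnion (fun s _ => ((Set.countable_singleton _).insert _)))

lemma countable_iter_fiber (n : ℕ) : ((F^[n]) ⁻¹' {1}).Countable := by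
  induction n with
  | zero => simp
  | succ n ih =>
    rw [Function.iterate_succ, Set.preimage_comp]
    have : F ⁻¹' (F^[n] ⁻¹' {1}) ⊆ ⋃ y ∈ F^[n] ⁻¹' {1}, F ⁻¹' {y} := by
      intro x hx; exact Set.mem_biUnion hx rfl
    exact Set.Countable.mono this (ih.biUnion (fun y _ => countable_fiber y))

lemma exists_ne_one {u v : ℝ} (huv : u < v) (n : ℕ) :
    ∃ y ∈ Set.Icc u v, F^[n] y ≠ 1 := by
  have hd : Dense ((F^[n] ⁻¹' {1})ᶜ) := (countable_iter_fiber n).dense_compl ℝ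
  obtain ⟨y, hy1, hy2⟩ := hd.exists_mem_open isOpen_Ioo (Set.nonempty_Ioo.2 huv)
  exact ⟨y, Set.Ioo_subset_Icc_self hy2, fun h => hy1 (by simp [h])⟩

lemma continuous_iter (n : ℕ) : Continuous (F^[n]) := continuous_F.iterate n

lemma iterate_mapsTo (n : ℕ) : Set.MapsTo (F^[n]) (Set.Icc (0:ℝ) 1) (Set.Icc (0:ℝ) 1) :=
  F_mapsTo.iterate n

/-- The crucial consequence: the iterated image of any nondegenerate subinterval of `[0,1]`
eventually contains an interval `[w,1]`, `w < 1`. -/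
lemma reach_top_interval {u v : ℝ} (h0 : 0 ≤ u) (huv : u < v) (h1 : v ≤ 1) :
    ∃ n w, w < 1 ∧ Set.Icc w 1 ⊆ F^[n] '' Set.Icc u v ∧ F^[n] '' Set.Icc u v ⊆ Set.Icc 0 1 := by
  obtain ⟨c, hc⟩ := exists_pow_lt_of_lt_one (by linarith : (0:ℝ) < v - u) (by norm_num : (1/2:ℝ) < 1)
  obtain ⟨n, hn⟩ := reaches_one_aux c u v h0 huv.le h1 hc
  set J := F^[n] '' Set.Icc u v with hJ
  have hJcompact : IsCompact J := (isCompact_Icc).image (continuous_iter n)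
  have hJconn : IsConnected J := ⟨⟨1, hn⟩, (isPreconnected_Icc).image _ (continuous_iter n).continuousOn⟩
  have hJsub : J ⊆ Set.Icc (0:ℝ) 1 := by
    rintro y ⟨x, hx, rfl⟩
    exact iterate_mapsTo n ⟨le_trans h0 hx.1, le_trans hx.2 h1⟩
  have hJeq : J = Set.Icc (sInf J) (sSup J) := eq_Icc_of_connected_compact hJconn hJcompact
  have hsup : sSup J = 1 := by
    apply le_antisymm
    · exact csSup_le ⟨1, hn⟩ (fun y hy => (hJsub hy).2)
    · exact le_csSup hJcompact.bddAbove hn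
  obtain ⟨y, hy, hyne⟩ := exists_ne_one huv n
  have hymem : F^[n] y ∈ J := ⟨y, hy, rfl⟩
  have hylt : F^[n] y < 1 := lt_of_le_of_ne (hJsub hymem).2 hyne
  have hinf : sInf J < 1 := lt_of_le_of_lt (csInf_le hJcompact.bddBelow hymem) hylt
  have hJeq' : J = Set.Icc (sInf J) 1 := by rw [← hsup]; exact hJeq
  refine ⟨n, sInf J, hinf, ?_, hJsub⟩
  rw [← hJeq']

end TentCascade

namespace TentCascade

noncomputable def f : (Set.Icc (0:ℝ) 1) → (Set.Icc (0:ℝ) 1) :=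
  fun x => ⟨F x.val, F_mem_Icc x.2.1 x.2.2⟩

lemma continuous_f : Continuous f :=
  Continuous.subtype_mk (continuous_F.comp continuous_subtype_val) _

lemma f_iterate_val (n : ℕ) (x : Set.Icc (0:ℝ) 1) : (f^[n] x).val = F^[n] x.val := by
  induction n with
  | zero => rfl
  | succ n ih =>
    rw [Function.iterate_succ_apply', Function.iterate_succ_apply']
    show F (f^[n] x).val = F (F^[n] x.val)
    rw [ih]

lemma mem_invariant_iterate {A : Set (Set.Icc (0:ℝ) 1)} (hInv : f '' A ⊆ A)
    {x : Set.Icc (0:ℝ) 1} (hx : x ∈ A) (n : ℕ) : f^[n] x ∈ A := by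
  induction n with
  | zero => exact hx
  | succ n ih => rw [Function.iterate_succ_apply']; exact hInv ⟨_, ih, rfl⟩

lemma le_iterate {y : ℝ} (h0 : 0 ≤ y) (h1 : y ≤ 1) (n : ℕ) : y ≤ F^[n] y := by
  induction n with
  | zero => exact le_refl y
  | succ n ih =>
    rw [Function.iterate_succ_apply']
    have hmem := iterate_mapsTo n (Set.mem_Icc.2 ⟨h0, h1⟩)
    exact le_trans ih (le_F_of_mem hmem.1 hmem.2)

/-- Every closed invariant set with nonempty interior contains a tail interval `[w,1]`. -/
lemma invariant_contains_tail {A : Set (Set.Icc (0:ℝ) 1)} (hInv : f '' A ⊆ A)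
    (hInt : (interior A).Nonempty) :
    ∃ w : ℝ, w < 1 ∧ ∀ (y : ℝ) (hy : y ∈ Set.Icc (0:ℝ) 1), w ≤ y → (⟨y, hy⟩ : Set.Icc (0:ℝ) 1) ∈ A := by
  obtain ⟨x₀, hx₀⟩ := hInt
  obtain ⟨ε, hε, hball⟩ := Metric.isOpen_iff.1 isOpen_interior x₀ hx₀
  set l : ℝ := max (x₀.val - ε/2) 0 with hl
  set r : ℝ := min (x₀.val + ε/2) 1 with hr
  have hl0 : 0 ≤ l := le_max_right _ _
  have hr1 : r ≤ 1 := min_le_right _ _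
  have hlr : l < r := by
    rcases lt_or_ge x₀.val 1 with h | h
    · have h1 : l ≤ x₀.val := max_le (by linarith) x₀.2.1
      have h2 : x₀.val < r := lt_min (by linarith) h
      linarith
    · have hx1 : x₀.val = 1 := le_antisymm x₀.2.2 h
      have : l < 1 := max_lt (by linarith) (by norm_num)
      have : r = 1 := by rw [hr, hx1]; exact min_eq_right (by linarith)
      linarith
  have hsubA : ∀ (y : ℝ) (hy : y ∈ Set.Icc (0:ℝ) 1), l ≤ y → y ≤ r →
      (⟨y, hy⟩ : Set.Icc (0:ℝ) 1) ∈ A := by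
    intro y hy hyl hyr
    apply interior_subset
    apply hball
    rw [Metric.mem_ball, Subtype.dist_eq, Real.dist_eq, abs_sub_lt_iff]
    have hcoe : ((⟨y, hy⟩ : Set.Icc (0:ℝ) 1) : ℝ) = y := rfl
    rw [hcoe]
    constructor
    · have : r ≤ x₀.val + ε/2 := min_le_left _ _
      linarith
    · have : x₀.val - ε/2 ≤ l := le_max_left _ _
      linarith
  obtain ⟨n, w, hw1, hw2, hw3⟩ := reach_top_interval hl0 hlr hr1
  refine ⟨w, hw1, ?_⟩
  intro y hy hwy
  have hymem : y ∈ F^[n] '' Set.Icc l r := hw2 ⟨hwy, hy.2⟩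
  obtain ⟨z, hz, hzy⟩ := hymem
  have hzmem : z ∈ Set.Icc (0:ℝ) 1 := ⟨le_trans hl0 hz.1, le_trans hz.2 hr1⟩
  have hzA : (⟨z, hzmem⟩ : Set.Icc (0:ℝ) 1) ∈ A := hsubA z hzmem hz.1 hz.2
  have := mem_invariant_iterate hInv hzA n
  have heq : f^[n] (⟨z, hzmem⟩ : Set.Icc (0:ℝ) 1) = ⟨y, hy⟩ := by
    apply Subtype.ext
    rw [f_iterate_val]
    exact hzy
  rwa [heq] at this

lemma indecomposable_f : Indecomposable f := by
  intro A B hAc hBc hAi hBi hAint hBint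
  obtain ⟨wA, hwA1, hwA2⟩ := invariant_contains_tail hAi hAint
  obtain ⟨wB, hwB1, hwB2⟩ := invariant_contains_tail hBi hBint
  set w := max wA wB with hw
  have hw1 : w < 1 := max_lt hwA1 hwB1
  have hU : {x : Set.Icc (0:ℝ) 1 | w < x.val} ⊆ A ∩ B := by
    intro x hx
    have hxv : x = ⟨x.val, x.2⟩ := rfl
    constructor
    · rw [hxv]; exact hwA2 x.val x.2 (le_trans (le_max_left _ _) (le_of_lt hx))
    · rw [hxv]; exact hwB2 x.val x.2 (le_trans (le_max_right _ _) (le_of_lt hx))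
  have hUopen : IsOpen {x : Set.Icc (0:ℝ) 1 | w < x.val} :=
    isOpen_Ioi.preimage continuous_subtype_val
  have hUne : ({x : Set.Icc (0:ℝ) 1 | w < x.val}).Nonempty :=
    ⟨⟨1, by norm_num⟩, hw1⟩
  obtain ⟨x, hx⟩ := hUne
  exact ⟨x, interior_maximal hU hUopen hx⟩

end TentCascade

namespace TentCascade

lemma F_ge_aa {n : ℕ} {x : ℝ} (h1 : aa n ≤ x) (h2 : x ≤ 1) : aa n ≤ F x := by
  rcases eq_or_lt_of_le h2 with he | hlt
  · rw [he, F_one]; exact (aa_lt_one n).le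
  · obtain ⟨k, hk1, hk2⟩ := bracket (le_trans (half_le_aa n) h1) hlt
    have hF := F_ge_gap hk1 hk2.le
    have hlt2 : aa n < aa (k+1) := lt_of_le_of_lt h1 hk2
    linarith

lemma not_strongly_indecomposable_f : ¬ StronglyIndecomposable f := by
  intro hstrong
  set A : ℕ → Set (Set.Icc (0:ℝ) 1) := fun n => {x | aa n ≤ x.val} with hA
  have hclosed : ∀ n, IsClosed (A n) := fun n => isClosed_Ici.preimage continuous_subtype_val
  have hinv : ∀ n, f '' A n ⊆ A n := by
    rintro n y ⟨x, hx, rfl⟩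
    exact F_ge_aa hx x.2.2
  have hint : ∀ n, (interior (A n)).Nonempty := by
    intro n
    have hopen : IsOpen {x : Set.Icc (0:ℝ) 1 | aa n < x.val} :=
      isOpen_Ioi.preimage continuous_subtype_val
    have hsub : {x : Set.Icc (0:ℝ) 1 | aa n < x.val} ⊆ A n := by
      intro x hx
      simp only [hA, Set.mem_setOf_eq] at *
      exact le_of_lt hx
    exact ⟨⟨1, by norm_num⟩, interior_maximal hsub hopen (aa_lt_one n)⟩
  obtain ⟨x, hx⟩ := hstrong A hclosed hinv hint
  have hval_one : ∀ z : Set.Icc (0:ℝ) 1, z ∈ (⋂ n, A n) → z.val = 1 := by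
    intro z hz
    have hzmem : ∀ n, aa n ≤ z.val := by
      intro n
      exact (Set.mem_iInter.1 hz) n
    by_contra hne
    have hlt : z.val < 1 := lt_of_le_of_ne z.2.2 hne
    obtain ⟨c, hc⟩ := exists_pow_lt_of_lt_one (by linarith : (0:ℝ) < 1 - z.val)
      (by norm_num : (1/2:ℝ) < 1)
    have := hzmem c
    have h2 : (1/2:ℝ)^(c+1) ≤ (1/2:ℝ)^c :=
      pow_le_pow_of_le_one (by norm_num) (by norm_num) (by omega)
    simp only [aa] at this
    linarith
  have hxval : x.val = 1 := hval_one x (interior_subset hx)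
  obtain ⟨ε, hε, hball⟩ := Metric.isOpen_iff.1 isOpen_interior x hx
  set y : ℝ := 1 - min ε 1 / 2 with hy
  have hymem : y ∈ Set.Icc (0:ℝ) 1 := by
    constructor
    · have : min ε 1 ≤ 1 := min_le_right _ _
      simp only [hy]; linarith
    · have : 0 < min ε 1 := lt_min hε (by norm_num)
      simp only [hy]; linarith
  have hyball : (⟨y, hymem⟩ : Set.Icc (0:ℝ) 1) ∈ Metric.ball x ε := by
    rw [Metric.mem_ball, Subtype.dist_eq, Real.dist_eq, hxval]
    have h1 : 0 < min ε 1 := lt_min hε (by norm_num)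
    have h2 : min ε 1 ≤ ε := min_le_left _ _
    have : (⟨y, hymem⟩ : Set.Icc (0:ℝ) 1).val = y := rfl
    rw [this, abs_of_nonpos (by simp only [hy]; linarith)]
    simp only [hy]; linarith
  have hymem2 := interior_subset (hball hyball)
  have hy1 : y = 1 := hval_one ⟨y, hymem⟩ hymem2
  have h1 : 0 < min ε 1 := lt_min hε (by norm_num)
  simp only [hy] at hy1
  linarith

lemma periodic_points_f :
    {x : Set.Icc (0:ℝ) 1 | ∃ k : ℕ, 1 ≤ k ∧ f^[k] x = x} =
      {(⟨0, by norm_num⟩ : Set.Icc (0:ℝ) 1), ⟨1, by norm_num⟩} := by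
  ext x
  simp only [Set.mem_setOf_eq, Set.mem_insert_iff, Set.mem_singleton_iff]
  constructor
  · rintro ⟨k, hk1, hk2⟩
    obtain ⟨m, rfl⟩ : ∃ m, k = m + 1 := ⟨k - 1, by omega⟩
    have hval : F^[m+1] x.val = x.val := by
      rw [← f_iterate_val, hk2]
    have hfx : F x.val ∈ Set.Icc (0:ℝ) 1 := F_mem_Icc x.2.1 x.2.2
    have hchain : F x.val ≤ F^[m+1] x.val := by
      rw [Function.iterate_succ_apply]
      exact le_iterate hfx.1 hfx.2 m
    have hle : x.val ≤ F x.val := le_F_of_mem x.2.1 x.2.2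
    rw [hval] at hchain
    have hfix : F x.val = x.val := le_antisymm hchain hle
    rcases eq_or_lt_of_le x.2.1 with h0 | h0
    · left; exact Subtype.ext h0.symm
    · rcases eq_or_lt_of_le x.2.2 with h1 | h1
      · right; exact Subtype.ext h1
      · exact absurd hfix (ne_of_gt (lt_F_of_mem h0 h1))
  · rintro (rfl | rfl)
    · exact ⟨1, le_refl 1, Subtype.ext (by simp only [Function.iterate_one]; exact F_zero)⟩
    · exact ⟨1, le_refl 1, Subtype.ext (by simp only [Function.iterate_one]; exact F_one)⟩

end TentCascade

theorem exists_indecomposable_not_strongly_with_only_two_periodic_points :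
    ∃ f : Set.Icc (0:ℝ) 1 → Set.Icc (0:ℝ) 1, Continuous f ∧
      Indecomposable f ∧ ¬ StronglyIndecomposable f ∧
      {x : Set.Icc (0:ℝ) 1 | ∃ k : ℕ, 1 ≤ k ∧ f^[k] x = x} =
        {⟨0, by norm_num⟩, ⟨1, by norm_num⟩} :=
  ⟨TentCascade.f, TentCascade.continuous_f, TentCascade.indecomposable_f,
    TentCascade.not_strongly_indecomposable_f, TentCascade.periodic_points_f⟩
end
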